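/- arXiv:1512.08476 — 2 statements merged into one kernel-verified Lean document; each statement's English description precedes it below -/
import Mathlib

section
/- Let T be a bounded linear operator on L² induced by a K⁰-kernel 𝐓 satisfying condition (iv), with subkernel operators Tₙ = PₙT. Suppose that ‖(T − Tₙ)Tₙᵐ‖ → 0 as n → ∞ for some m ∈ ℕ. Then for any complex sequence {βₙ} with βₙ → 0, ∇_s({βₙI + Tₙ}) = Π(T) \ {0} ⊆ ∇_b({βₙI + Tₙ}). -/
open MeasureTheory Filter Topology ContinuousLinearMap
open scoped ENNReal NNReal

noncomputable section

/-- `L²(ℝ)`, the complex Hilbert space of square-integrable functions on `ℝ`. -/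
abbrev L2 : Type := MeasureTheory.Lp ℂ 2 (MeasureTheory.volume : MeasureTheory.Measure ℝ)

/-- Bounded linear operators on `L²`. -/
abbrev L2op : Type := L2 →L[ℂ] L2

/-- `T` is the integral operator induced by the kernel `K`:
`(Tf)(s) = ∫ K(s,t) f(t) dt` for every `f ∈ L²` and almost every `s`. -/
def IsInducedBy (T : L2op) (K : ℝ → ℝ → ℂ) : Prop :=
  ∀ f : L2, ∀ᵐ s : ℝ, (T f : ℝ → ℂ) s = ∫ t : ℝ, K s t * (f : ℝ → ℂ) t

/-- `K` is a `K⁰`-kernel with associated Carleman functions `kt`, `kt'`: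
`kt s = conj (K s ·)` and `kt' s = K · s` as elements of `L²`, the kernel is
continuous and vanishes at infinity, and both Carleman functions are continuous
and vanish at infinity in `L²`-norm. -/
structure IsK0Kernel (K : ℝ → ℝ → ℂ) (kt kt' : ℝ → L2) : Prop where
  repr_t : ∀ s : ℝ, (kt s : ℝ → ℂ) =ᵐ[volume] fun x => (starRingEnd ℂ) (K s x)
  repr_t' : ∀ s : ℝ, (kt' s : ℝ → ℂ) =ᵐ[volume] fun x => K x s
  cont : Continuous fun p : ℝ × ℝ => K p.1 p.2
  vanish : Tendsto (fun p : ℝ × ℝ => K p.1 p.2) (cocompact (ℝ × ℝ)) (𝓝 0)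
  cont_t : Continuous kt
  vanish_t : Tendsto kt (cocompact ℝ) (𝓝 0)
  cont_t' : Continuous kt'
  vanish_t' : Tendsto kt' (cocompact ℝ) (𝓝 0)

/-- The set `Π(T)` of regular values of `T`: those `λ` for which `I - λT` is invertible. -/
def regularSet (T : L2op) : Set ℂ := {lam : ℂ | IsUnit (1 - lam • T)}

/-- The resolvent `R_λ(T) = (I - λT)⁻¹` (junk value `0` if `λ ∉ Π(T)`). -/
def res (T : L2op) (lam : ℂ) : L2op := Ring.inverse (1 - lam • T)

/-- The Fredholm resolvent `T_{|λ} = T R_λ(T)`. -/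
def fres (T : L2op) (lam : ℂ) : L2op := T * res T lam

/-- The region of boundedness `∇_b({Sₙ})`. -/
def nablaB (S : ℕ → L2op) : Set ℂ :=
  {ζ : ℂ | ζ ≠ 0 ∧ ∃ M : ℝ, 0 < M ∧ ∃ N : ℕ, ∀ n > N,
      ζ ∈ regularSet (S n) ∧ ‖fres (S n) ζ‖ ≤ M}

/-- The region of strong convergence `∇_s({Sₙ})`: the `ζ ∈ ∇_b({Sₙ})` such that
the Fredholm resolvents `S_{n|ζ}` converge in the strong operator topology. -/
def nablaS (S : ℕ → L2op) : Set ℂ :=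
  {ζ : ℂ | ζ ∈ nablaB S ∧
    ∀ f : L2, ∃ g : L2, Tendsto (fun n => fres (S n) ζ f) atTop (𝓝 g)}

/-- Nuclear (trace class) operator on `L²`. -/
def IsNuclear (T : L2op) : Prop :=
  ∃ g h : ℕ → L2, Summable (fun k => ‖g k‖ * ‖h k‖) ∧
    ∀ f : L2, T f = ∑' k : ℕ, (inner ℂ f (g k) : ℂ) • h k

/-- The characteristic function `χ` of the interval `(-τ, τ)`, with complex values. -/
def chi (t : ℝ) (x : ℝ) : ℂ := Set.indicator (Set.Ioo (-t) t) 1 x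

/-- Condition (iv) for a `K⁰`-kernel `K` inducing `T`: the positive reals `τ n`
strictly increase to `+∞`, `P n` is the orthogonal projection given by multiplication
by `χₙ = chi (τ n)`, the subkernels `Kₙ(s,t) = χₙ(s)K(s,t)` and
`K̃ₙ(s,t) = χₙ(s)K(s,t)χₙ(t)` are `K⁰`-kernels, and the induced operators
`Tₙ = PₙT` and `T̃ₙ = PₙTPₙ` are nuclear. -/
structure ConditionIV (K : ℝ → ℝ → ℂ) (T : L2op) (tau : ℕ → ℝ) (P : ℕ → L2op) : Prop where
  pos : ∀ n, 0 < tau n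
  mono : StrictMono tau
  tendsto_top : Tendsto tau atTop atTop
  proj : ∀ n, ∀ f : L2, (P n f : ℝ → ℂ) =ᵐ[volume] fun x => chi (tau n) x * (f : ℝ → ℂ) x
  subker : ∀ n, ∃ kt kt' : ℝ → L2, IsK0Kernel (fun s t => chi (tau n) s * K s t) kt kt'
  subker' : ∀ n, ∃ kt kt' : ℝ → L2,
      IsK0Kernel (fun s t => chi (tau n) s * K s t * chi (tau n) t) kt kt'
  nuclear : ∀ n, IsNuclear (P n * T)
  nuclear' : ∀ n, IsNuclear (P n * T * P n)

/-- `λₙ(λ) = λ(1 - βₙλ)⁻¹`. -/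
def lamn (b : ℕ → ℂ) (lam : ℂ) (n : ℕ) : ℂ := lam * (1 - b n * lam)⁻¹

/-- The resolvent kernel for `K` at `λ` built from the resolvent Carleman function
`𝐭'_{|λ}(t) = R_λ(T)(kt' t)`:  `𝐓_{|λ}(s,t) = λ⟨𝐭'_{|λ}(t), 𝐭(s)⟩ + 𝐓(s,t)`
(the paper's inner product `⟨a,b⟩ = ∫ a conj b` is `inner b a` in Mathlib). -/
def resKer (T : L2op) (K : ℝ → ℝ → ℂ) (kt kt' : ℝ → L2) (lam : ℂ) (s t : ℝ) : ℂ :=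
  lam * (inner ℂ (kt s) (res T lam (kt' t)) : ℂ) + K s t

/-- The resolvent kernel for the subkernel `Kₙ` at `λ`:
`𝐓_{n|λ}(s,t) = λ χₙ(s) ⟨𝐭'_{n|λ}(t), 𝐭(s)⟩ + 𝐓ₙ(s,t)`, where
`𝐭'_{n|λ}(t) = R_λ(Tₙ) Pₙ (kt' t)` and `𝐓ₙ(s,t) = χₙ(s) 𝐓(s,t)`. -/
def resKerN (T : L2op) (K : ℝ → ℝ → ℂ) (kt kt' : ℝ → L2) (taun : ℝ) (Pn : L2op)
    (lam : ℂ) (s t : ℝ) : ℂ :=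
  lam * chi taun s * (inner ℂ (kt s) (res (Pn * T) lam (Pn (kt' t))) : ℂ) + chi taun s * K s t

/-- `R` is a resolvent kernel for the `K⁰`-kernel `K` at `λ` (Definition 2 of the paper):
`R` is a `K⁰`-kernel satisfying the two simultaneous integral equations and the
square-integrability condition. -/
def IsResolventKernel (K : ℝ → ℝ → ℂ) (lam : ℂ) (R : ℝ → ℝ → ℂ) : Prop :=
  (∃ rt rt' : ℝ → L2, IsK0Kernel R rt rt') ∧
  (∀ s t : ℝ, R s t - lam * ∫ x : ℝ, K s x * R x t = K s t) ∧
  (∀ s t : ℝ, R s t - lam * ∫ x : ℝ, R s x * K x t = K s t) ∧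
  (∀ f : L2, ∫⁻ s : ℝ, ((‖∫ t : ℝ, R s t * (f : ℝ → ℂ) t‖₊ : ℝ≥0) : ℝ≥0∞) ^ 2 < ⊤)

section Helpers

variable {A : Type} [Ring A]

lemma isUnit_of_left_right {a b c : A} (h1 : a * b = 1) (h2 : c * a = 1) : IsUnit a := by
  have hbc : c = b := by
    calc c = c * (a * b) := by rw [h1, mul_one]
    _ = (c * a) * b := by rw [← mul_assoc]
    _ = b := by rw [h2, one_mul]
  exact ⟨⟨a, b, h1, by rw [← hbc]; exact h2⟩, rfl⟩

lemma ringInverse_eq_of_mul {M : Type} [MonoidWithZero M] {a b : M} (hu : IsUnit a)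
    (h : a * b = 1) : Ring.inverse a = b := by
  calc Ring.inverse a = Ring.inverse a * (a * b) := by rw [h, mul_one]
  _ = (Ring.inverse a * a) * b := by rw [mul_assoc]
  _ = b := by rw [Ring.inverse_mul_cancel _ hu, one_mul]

lemma ringInverse_eq_of_mul' {M : Type} [MonoidWithZero M] {a b : M} (hu : IsUnit a)
    (h : b * a = 1) : Ring.inverse a = b := by
  calc Ring.inverse a = (b * a) * Ring.inverse a := by rw [h, one_mul]
  _ = b * (a * Ring.inverse a) := by rw [mul_assoc]
  _ = b := by rw [Ring.mul_inverse_cancel _ hu, mul_one]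

lemma ringid (α β r : A) (h : r * (1 - α) = 1) (m : ℕ) :
    ((∑ j ∈ Finset.range m, β ^ j) + r * β ^ m) * (1 - β)
      = 1 + r * ((α - β) * β ^ m) := by
  have h1 : (∑ j ∈ Finset.range m, β ^ j) * (1 - β) = 1 - β ^ m := by
    have h0 := geom_sum_mul β m
    have h2 : (∑ j ∈ Finset.range m, β ^ j) * (1 - β)
        = -((∑ j ∈ Finset.range m, β ^ j) * (β - 1)) := by noncomm_ring
    rw [h2, h0]; noncomm_ring
  have h3 : (r * β ^ m) * (1 - β) = β ^ m + r * ((α - β) * β ^ m) := by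
    have hc : β ^ m * β = β * β ^ m := by
      rw [← pow_succ, ← pow_succ']
    have key : β ^ m * (1 - β) = (1 - α) * β ^ m + (α - β) * β ^ m := by
      calc β ^ m * (1 - β) = β ^ m - β ^ m * β := by noncomm_ring
      _ = β ^ m - β * β ^ m := by rw [hc]
      _ = (1 - α) * β ^ m + (α - β) * β ^ m := by noncomm_ring
    calc (r * β ^ m) * (1 - β) = r * (β ^ m * (1 - β)) := by rw [mul_assoc]
    _ = r * ((1 - α) * β ^ m) + r * ((α - β) * β ^ m) := by rw [key]; noncomm_ring
    _ = (r * (1 - α)) * β ^ m + r * ((α - β) * β ^ m) := by rw [mul_assoc]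
    _ = β ^ m + r * ((α - β) * β ^ m) := by rw [h, one_mul]
  calc ((∑ j ∈ Finset.range m, β ^ j) + r * β ^ m) * (1 - β)
      = (∑ j ∈ Finset.range m, β ^ j) * (1 - β) + (r * β ^ m) * (1 - β) := by noncomm_ring
  _ = (1 - β ^ m) + (β ^ m + r * ((α - β) * β ^ m)) := by rw [h1, h3]
  _ = 1 + r * ((α - β) * β ^ m) := by noncomm_ring

end Helpers

lemma unit_inv_identities {A : Type} [Ring A] {a : A} (hu : IsUnit (1 - a)) :
    (1 - a) * (1 + a * Ring.inverse (1 - a)) = 1 ∧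
      (1 + a * Ring.inverse (1 - a)) * (1 - a) = 1 := by
  set r := Ring.inverse (1 - a) with hr
  have h1 : (1 - a) * r = 1 := Ring.mul_inverse_cancel _ hu
  have h2 : r * (1 - a) = 1 := Ring.inverse_mul_cancel _ hu
  constructor
  · have hcomm : (1 - a) * a = a * (1 - a) := by noncomm_ring
    calc (1 - a) * (1 + a * r) = (1 - a) + ((1 - a) * a) * r := by noncomm_ring
    _ = (1 - a) + a * ((1 - a) * r) := by rw [hcomm, mul_assoc]
    _ = 1 := by rw [h1]; noncomm_ring
  · calc (1 + a * r) * (1 - a) = (1 - a) + a * (r * (1 - a)) := by noncomm_ring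
    _ = 1 := by rw [h2]; noncomm_ring

section NormedHelpers
variable {A : Type} [NormedRing A]

lemma norm_ringInverse_one_add_le {e : A} (h1A : ‖(1:A)‖ ≤ 1)
    (hu : IsUnit (1 + e)) (he : ‖e‖ ≤ 1/2) :
    ‖Ring.inverse (1 + e)‖ ≤ 2 := by
  set x := Ring.inverse (1 + e) with hx
  have h1 : (1 + e) * x = 1 := Ring.mul_inverse_cancel _ hu
  have h2 : x + e * x = 1 := by rw [add_mul, one_mul] at h1; exact h1
  have h3 : ‖x‖ ≤ 1 + ‖e‖ * ‖x‖ := by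
    have : x = 1 - e * x := by rw [eq_sub_iff_add_eq]; exact h2
    calc ‖x‖ = ‖(1 : A) - e * x‖ := by rw [← this]
    _ ≤ ‖(1 : A)‖ + ‖e * x‖ := norm_sub_le _ _
    _ ≤ 1 + ‖e‖ * ‖x‖ := add_le_add h1A (norm_mul_le _ _)
  nlinarith [norm_nonneg x]
end NormedHelpers
section Compactness
set_option maxHeartbeats 1000000

lemma isCompactOperator_of_isNuclear {N : L2op} (h : IsNuclear N) :
    IsCompactOperator (⇑N) := by
  obtain ⟨g, hv, hsum, hrep⟩ := h
  set w : ℕ → ℝ := fun k => ‖g k‖ * ‖hv k‖ with hw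
  have hwnn : ∀ k, 0 ≤ w k := fun k => mul_nonneg (norm_nonneg _) (norm_nonneg _)
  set a : L2 → ℕ → L2 := fun f k => (inner ℂ f (g k) : ℂ) • hv k with ha
  have hbd : ∀ f k, ‖a f k‖ ≤ ‖f‖ * w k := by
    intro f k
    calc ‖a f k‖ = ‖(inner ℂ f (g k) : ℂ)‖ * ‖hv k‖ := norm_smul _ _
    _ ≤ (‖f‖ * ‖g k‖) * ‖hv k‖ :=
        mul_le_mul_of_nonneg_right (norm_inner_le_norm _ _) (norm_nonneg _)
    _ = ‖f‖ * w k := by rw [hw]; ring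
  have hsa : ∀ f, Summable (a f) := fun f =>
    Summable.of_norm_bounded (hsum.mul_left ‖f‖) (hbd f)
  set tail : ℕ → ℝ := fun j => ∑' k, w (k + j) with htl
  have htail : Filter.Tendsto tail Filter.atTop (nhds 0) := tendsto_sum_nat_add w
  have htailnn : ∀ j, 0 ≤ tail j := fun j =>
    tsum_nonneg fun k => hwnn _
  have happrox : ∀ j, ∀ f : L2, ‖f‖ ≤ 1 →
      ‖N f - ∑ k ∈ Finset.range j, a f k‖ ≤ tail j := by
    intro j f hf
    have hsplit := Summable.sum_add_tsum_nat_add (f := a f) j (hsa f)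
    have hdiff : N f - ∑ k ∈ Finset.range j, a f k = ∑' k, a f (k + j) := by
      rw [hrep f, ← hsplit]; abel
    rw [hdiff]
    have hs0 : Summable fun k => ‖a f k‖ :=
      Summable.of_nonneg_of_le (fun k => norm_nonneg _) (hbd f) (hsum.mul_left ‖f‖)
    have hs1 : Summable fun k => ‖a f (k + j)‖ := (summable_nat_add_iff j).2 hs0
    have hs2 : Summable fun k => w (k + j) := (summable_nat_add_iff j).2 hsum
    calc ‖∑' k, a f (k + j)‖ ≤ ∑' k, ‖a f (k + j)‖ := norm_tsum_le_tsum_norm hs1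
    _ ≤ ∑' k, w (k + j) := by
        refine hs1.tsum_le_tsum (fun k => ?_) hs2
        calc ‖a f (k + j)‖ ≤ ‖f‖ * w (k + j) := hbd f _
        _ ≤ 1 * w (k + j) := mul_le_mul_of_nonneg_right hf (hwnn _)
        _ = w (k + j) := one_mul _
    _ = tail j := rfl
  refine ⟨closure (⇑N '' Metric.closedBall 0 1), ?_, ?_⟩
  · -- compact
    refine TotallyBounded.isCompact_of_isClosed ?_ isClosed_closure
    refine TotallyBounded.closure ?_
    rw [Metric.totallyBounded_iff]
    intro ε hε
    obtain ⟨j, hj⟩ := (htail.eventually_lt_const (show (0:ℝ) < ε/2 by linarith)).exists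
    set S : Submodule ℂ L2 := Submodule.span ℂ (Set.range fun k : Fin j => hv k) with hS
    haveI : FiniteDimensional ℂ S := FiniteDimensional.span_of_finite ℂ (Set.finite_range _)
    set C : ℝ := (∑' k, w k) + 1 with hC
    have hmemS : ∀ f : L2, (∑ k ∈ Finset.range j, a f k) ∈ S := by
      intro f
      refine Submodule.sum_mem _ fun k hk => Submodule.smul_mem _ _ ?_
      exact Submodule.subset_span ⟨⟨k, Finset.mem_range.1 hk⟩, rfl⟩
    have hnormS : ∀ f : L2, ‖f‖ ≤ 1 → ‖∑ k ∈ Finset.range j, a f k‖ ≤ C := by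
      intro f hf
      calc ‖∑ k ∈ Finset.range j, a f k‖ ≤ ∑ k ∈ Finset.range j, ‖a f k‖ :=
          norm_sum_le _ _
      _ ≤ ∑ k ∈ Finset.range j, w k := by
          refine Finset.sum_le_sum fun k hk => ?_
          calc ‖a f k‖ ≤ ‖f‖ * w k := hbd f k
          _ ≤ 1 * w k := mul_le_mul_of_nonneg_right hf (hwnn _)
          _ = w k := one_mul _
      _ ≤ ∑' k, w k := hsum.sum_le_tsum _ (fun k _ => hwnn k)
      _ ≤ C := by rw [hC]; linarith
    haveI : ProperSpace S := FiniteDimensional.proper ℂ S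
    have hKc : IsCompact ((Subtype.val : S → L2) '' Metric.closedBall 0 C) :=
      (isCompact_closedBall (0 : S) C).image continuous_subtype_val
    obtain ⟨t, htf, htc⟩ := (Metric.totallyBounded_iff).1 hKc.totallyBounded (ε/2)
      (by linarith)
    refine ⟨t, htf, ?_⟩
    rintro y ⟨f, hfball, rfl⟩
    have hf1 : ‖f‖ ≤ 1 := by simpa [Metric.mem_closedBall] using hfball
    have hFS : (∑ k ∈ Finset.range j, a f k) ∈
        (Subtype.val : S → L2) '' Metric.closedBall 0 C := by
      refine ⟨⟨_, hmemS f⟩, ?_, rfl⟩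
      simpa [Metric.mem_closedBall, Submodule.coe_norm] using hnormS f hf1
    obtain ⟨c, hct, hcball⟩ := Set.mem_iUnion₂.1 (htc hFS)
    refine Set.mem_iUnion₂.2 ⟨c, hct, ?_⟩
    rw [Metric.mem_ball] at hcball ⊢
    calc dist (N f) c ≤ dist (N f) (∑ k ∈ Finset.range j, a f k)
          + dist (∑ k ∈ Finset.range j, a f k) c := dist_triangle _ _ _
    _ < ε/2 + ε/2 := by
        refine add_lt_add_of_le_of_lt ?_ hcball
        rw [dist_eq_norm]
        exact (happrox j f hf1).trans hj.le
    _ = ε := by ring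
  · exact Filter.mem_of_superset (Metric.closedBall_mem_nhds 0 one_pos)
      (fun f hf => subset_closure ⟨f, hf, rfl⟩)

end Compactness
section Fredholm
set_option maxHeartbeats 1000000

lemma isUnit_one_sub_of_compact_of_leftInv {N L : L2op}
    (hcN : IsCompactOperator (⇑N)) (hL : L * (1 - N) = 1) : IsUnit (1 - N) := by
  classical
  set A : L2op := 1 - N with hA
  have happ : ∀ x, L (A x) = x := by
    intro x
    have h := congrArg (fun S : L2op => S x) hL
    simpa using h
  set c : ℝ := ‖L‖ + 1 with hc
  have hc1 : 1 ≤ c := by have := norm_nonneg L; rw [hc]; linarith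
  have hc0 : 0 ≤ c := by linarith
  have hbb : ∀ x : L2, ‖x‖ ≤ c * ‖A x‖ := by
    intro x
    calc ‖x‖ = ‖L (A x)‖ := by rw [happ]
    _ ≤ ‖L‖ * ‖A x‖ := L.le_opNorm _
    _ ≤ c * ‖A x‖ := by
        have := norm_nonneg (A x); rw [hc]; nlinarith
  have hpow_apply : ∀ (k : ℕ) (x : L2), (A ^ (k+1)) x = (A ^ k) (A x) := by
    intro k x
    rw [pow_succ]
    rfl
  have hpow_apply' : ∀ (k : ℕ) (x : L2), (A ^ (k+1)) x = A ((A ^ k) x) := by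
    intro k x
    rw [pow_succ']
    rfl
  have hbbk : ∀ (k : ℕ) (x : L2), ‖x‖ ≤ c ^ k * ‖(A ^ k) x‖ := by
    intro k
    induction k with
    | zero => intro x; simp
    | succ k ih =>
      intro x
      calc ‖x‖ ≤ c * ‖A x‖ := hbb x
      _ ≤ c * (c ^ k * ‖(A ^ k) (A x)‖) := by
          have := ih (A x)
          nlinarith [norm_nonneg (A x)]
      _ = c ^ (k+1) * ‖(A ^ (k+1)) x‖ := by rw [hpow_apply]; ring
  have hinjk : ∀ k : ℕ, Function.Injective (⇑(A ^ k)) := by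
    intro k x y hxy
    have h1 : ‖x - y‖ ≤ c ^ k * ‖(A ^ k) (x - y)‖ := hbbk k _
    rw [map_sub, hxy, sub_self, norm_zero, mul_zero] at h1
    have := norm_nonneg (x - y)
    have : ‖x - y‖ = 0 := le_antisymm h1 this
    exact sub_eq_zero.1 (norm_eq_zero.1 this)
  have hinj : Function.Injective ⇑A := by
    have := hinjk 1
    simpa using this
  have hsurj : Function.Surjective ⇑A := by
    by_contra hsur
    set H : ℕ → Submodule ℂ L2 := fun k => LinearMap.range ((A ^ k : L2op) : L2 →ₗ[ℂ] L2) with hH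
    have hmem : ∀ (k : ℕ) (y : L2), (A ^ k) y ∈ H k := fun k y => ⟨y, rfl⟩
    have hHclosed : ∀ k, IsClosed ((H k : Set L2)) := by
      intro k
      have hal : AntilipschitzWith (Real.toNNReal (c ^ k)) (⇑(A ^ k)) := by
        refine AntilipschitzWith.of_le_mul_dist fun x y => ?_
        rw [dist_eq_norm, dist_eq_norm, ← map_sub]
        calc ‖x - y‖ ≤ c ^ k * ‖(A ^ k) (x - y)‖ := hbbk k _
        _ = (Real.toNNReal (c ^ k) : ℝ) * ‖(A ^ k) (x - y)‖ := by
            rw [Real.coe_toNNReal _ (by positivity)]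
      have h2 := hal.isClosed_range (A ^ k).uniformContinuous
      have h3 : (H k : Set L2) = Set.range (⇑(A ^ k)) := by
        ext y
        exact Iff.rfl
      rw [h3]
      exact h2
    have hstep : ∀ k, H (k+1) ≤ H k := by
      intro k y hy
      obtain ⟨x, hx⟩ := hy
      exact ⟨A x, by rw [← hx, ContinuousLinearMap.coe_coe, ContinuousLinearMap.coe_coe, hpow_apply]⟩
    have hanti : ∀ {k l : ℕ}, k ≤ l → H l ≤ H k := fun hkl =>
      antitone_nat_of_succ_le hstep hkl
    have hstrict : ∀ k, ¬ (H k ≤ H (k+1)) := by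
      intro k hle
      apply hsur
      intro y
      have h1 : (A ^ k) y ∈ H (k+1) := hle (hmem k y)
      obtain ⟨z, hz⟩ := h1
      rw [ContinuousLinearMap.coe_coe, hpow_apply] at hz
      exact ⟨z, hinjk k hz⟩
    have hx : ∀ k : ℕ, ∃ x : L2, ‖x‖ = 1 ∧ x ∈ H k ∧ ∀ u ∈ H (k+1), inner ℂ x u = (0:ℂ) := by
      intro k
      obtain ⟨v, hvk, hvk1⟩ := SetLike.not_le_iff_exists.1 (hstrict k)
      haveI : CompleteSpace (H (k+1)) := (hHclosed (k+1)).completeSpace_coe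
      set w : L2 := v - ((H (k+1)).orthogonalProjectionOnto v : L2) with hw
      have hwo : w ∈ (H (k+1))ᗮ := Submodule.sub_starProjection_mem_orthogonal (K := H (k+1)) v
      have hwk : w ∈ H k := by
        refine sub_mem hvk (hstep k ?_)
        exact SetLike.coe_mem _
      have hwne : w ≠ 0 := by
        intro h0
        apply hvk1
        have : v = ((H (k+1)).orthogonalProjectionOnto v : L2) := by
          rw [← sub_eq_zero]; exact h0
        rw [this]; exact SetLike.coe_mem _
      have hwn : ‖w‖ ≠ 0 := norm_ne_zero_iff.2 hwne
      refine ⟨((‖w‖ : ℂ))⁻¹ • w, ?_, Submodule.smul_mem _ _ hwk, ?_⟩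
      · rw [norm_smul, norm_inv, Complex.norm_real, Real.norm_eq_abs,
          abs_of_nonneg (norm_nonneg w)]
        field_simp
      · intro u hu
        have h1 : inner ℂ u w = (0:ℂ) := hwo u hu
        have h2 : inner ℂ w u = (0:ℂ) := by
          rw [← inner_conj_symm, h1, map_zero]
        rw [inner_smul_left, h2, mul_zero]
    choose x hx1 hx2 hx3 using hx
    have hAx : ∀ k, A (x k) ∈ H (k+1) := by
      intro k
      obtain ⟨y, hy⟩ := hx2 k
      exact ⟨y, by rw [ContinuousLinearMap.coe_coe] at hy ⊢; rw [hpow_apply', hy]⟩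
    have hNdist : ∀ {k l : ℕ}, k < l → 1 ≤ ‖N (x k) - N (x l)‖ := by
      intro k l hkl
      have hNy : ∀ y : L2, N y = y - A y := by
        intro y; rw [hA]; simp
      set u : L2 := A (x k) + x l - A (x l) with hu
      have hum : u ∈ H (k+1) := by
        refine sub_mem (add_mem (hAx k) ?_) ?_
        · exact hanti hkl (hx2 l)
        · exact hanti (by omega : k + 1 ≤ l + 1) (hAx l)
      have hdiff : N (x k) - N (x l) = x k + -u := by
        rw [hNy, hNy, hu]; abel
      have hio : inner ℂ (x k) (-u) = (0:ℂ) := by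
        rw [inner_neg_right, hx3 k u hum, neg_zero]
      have hpyth := norm_add_sq_eq_norm_sq_add_norm_sq_of_inner_eq_zero (x k) (-u) hio
      rw [hdiff]
      have h1 : ‖x k‖ = 1 := hx1 k
      nlinarith [norm_nonneg (x k + -u), norm_nonneg (-u), hpyth]
    obtain ⟨K, hK, hKn⟩ := hcN
    obtain ⟨ε, hε, hball⟩ := Metric.mem_nhds_iff.1 hKn
    set y : ℕ → L2 := fun k => N ((((ε/2 : ℝ)) : ℂ) • x k) with hy
    have hyK : ∀ k, y k ∈ K := by
      intro k
      apply hball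
      rw [Metric.mem_ball, dist_zero_right, norm_smul, hx1 k, Complex.norm_real,
        Real.norm_eq_abs, abs_of_pos (by linarith : (0:ℝ) < ε/2)]
      linarith
    have hydist : ∀ {k l : ℕ}, k ≠ l → ε/2 ≤ dist (y k) (y l) := by
      have key : ∀ {k l : ℕ}, k < l → ε/2 ≤ dist (y k) (y l) := by
        intro k l hkl
        rw [dist_eq_norm, hy]
        have : N ((((ε/2 : ℝ)) : ℂ) • x k) - N ((((ε/2 : ℝ)) : ℂ) • x l)
            = (((ε/2 : ℝ)) : ℂ) • (N (x k) - N (x l)) := by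
          rw [_root_.map_smul, _root_.map_smul, smul_sub]
        rw [this, norm_smul, Complex.norm_real, Real.norm_eq_abs]
        have h2 := hNdist hkl
        rw [abs_of_pos (by linarith : (0:ℝ) < ε/2)]
        nlinarith
      intro k l hkl
      rcases Nat.lt_or_ge k l with h | h
      · exact key h
      · have h2 : l < k := by omega
        rw [dist_comm]; exact key h2
    obtain ⟨t, htf, htc⟩ := (Metric.totallyBounded_iff).1 hK.totallyBounded (ε/5)
      (by linarith)
    have hcov : ∀ k : ℕ, ∃ z ∈ t, y k ∈ Metric.ball z (ε/5) := by
      intro k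
      have := htc (hyK k)
      simpa using this
    choose z hzt hzb using hcov
    haveI : Finite ↥t := htf.to_subtype
    obtain ⟨k, l, hkl, hzeq⟩ := Finite.exists_ne_map_eq_of_infinite
      (fun k : ℕ => (⟨z k, hzt k⟩ : ↥t))
    have hzeq' : z k = z l := by
      simpa using congrArg Subtype.val hzeq
    have h1 : dist (y k) (y l) < 2 * (ε/5) := by
      calc dist (y k) (y l) ≤ dist (y k) (z k) + dist (z k) (y l) := dist_triangle _ _ _
      _ < ε/5 + ε/5 := by
          refine add_lt_add ?_ ?_
          · exact Metric.mem_ball.1 (hzb k)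
          · rw [hzeq', dist_comm]; exact Metric.mem_ball.1 (hzb l)
      _ = 2 * (ε/5) := by ring
    have h2 := hydist hkl
    linarith
  have hker : A.ker = ⊥ := LinearMap.ker_eq_bot (f := (A : L2 →ₗ[ℂ] L2)).2 hinj
  have hrange : A.range = ⊤ := LinearMap.range_eq_top (f := (A : L2 →ₗ[ℂ] L2)).2 hsurj
  set e := ContinuousLinearEquiv.ofBijective A hker hrange with he
  have hce : ∀ x, e x = A x := fun x => rfl
  refine isUnit_of_left_right (b := (e.symm : L2op)) (c := (e.symm : L2op)) ?_ ?_
  · ext v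
    have : A ((e.symm : L2op) v) = e (e.symm v) := (hce _).symm
    simp only [ContinuousLinearMap.mul_apply, ContinuousLinearMap.one_apply]
    rw [this, e.apply_symm_apply]
  · ext v
    have h0 : (e.symm : L2op) (A v) = e.symm (A v) := rfl
    simp only [ContinuousLinearMap.mul_apply, ContinuousLinearMap.one_apply]
    rw [h0, ← hce v, e.symm_apply_apply]
end Fredholm
section Projection
set_option maxHeartbeats 1000000

lemma chi_norm_le (t x : ℝ) : ‖chi t x‖ ≤ 1 := by
  rw [chi, Set.indicator]
  split <;> simp

lemma Pn_norm_apply_le {Pn : L2op} {t : ℝ}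
    (hproj : ∀ f : L2, (Pn f : ℝ → ℂ) =ᵐ[volume] fun x => chi t x * (f : ℝ → ℂ) x)
    (f : L2) : ‖Pn f‖ ≤ ‖f‖ := by
  rw [Lp.norm_def, Lp.norm_def]
  have h1 : eLpNorm (Pn f : ℝ → ℂ) 2 volume
      = eLpNorm (fun x => chi t x * (f : ℝ → ℂ) x) 2 volume :=
    eLpNorm_congr_ae (hproj f)
  have h2 : eLpNorm (fun x => chi t x * (f : ℝ → ℂ) x) 2 volume
      ≤ eLpNorm (f : ℝ → ℂ) 2 volume := by
    apply eLpNorm_mono_ae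
    refine Filter.Eventually.of_forall fun x => ?_
    rw [norm_mul]
    calc ‖chi t x‖ * ‖(f : ℝ → ℂ) x‖ ≤ 1 * ‖(f : ℝ → ℂ) x‖ :=
        mul_le_mul_of_nonneg_right (chi_norm_le t x) (norm_nonneg _)
    _ = _ := one_mul _
  exact ENNReal.toReal_mono (Lp.eLpNorm_ne_top f) (le_trans (le_of_eq h1) h2)

lemma Pn_opNorm_le {Pn : L2op} {t : ℝ}
    (hproj : ∀ f : L2, (Pn f : ℝ → ℂ) =ᵐ[volume] fun x => chi t x * (f : ℝ → ℂ) x) :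
    ‖Pn‖ ≤ 1 :=
  Pn.opNorm_le_bound zero_le_one fun f => by
    rw [one_mul]; exact Pn_norm_apply_le hproj f

lemma Pn_tendsto_strongly {tau : ℕ → ℝ} {P : ℕ → L2op}
    (hproj : ∀ n, ∀ f : L2,
      (P n f : ℝ → ℂ) =ᵐ[volume] fun x => chi (tau n) x * (f : ℝ → ℂ) x)
    (htau : Filter.Tendsto tau Filter.atTop Filter.atTop) (f : L2) :
    Filter.Tendsto (fun n => P n f) Filter.atTop (nhds f) := by
  rw [tendsto_iff_norm_sub_tendsto_zero]
  set g : ℕ → ℝ → ℂ := fun n x => (chi (tau n) x - 1) * (f : ℝ → ℂ) x with hg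
  have hcong : ∀ n, ((P n f - f : L2) : ℝ → ℂ) =ᵐ[volume] g n := by
    intro n
    filter_upwards [Lp.coeFn_sub (P n f) f, hproj n f] with x h1 h2
    rw [h1, Pi.sub_apply, h2, hg]
    ring
  have hnorm : ∀ n, ‖P n f - f‖ = (eLpNorm (g n) 2 volume).toReal := by
    intro n
    rw [Lp.norm_def, eLpNorm_congr_ae (hcong n)]
  set F : ℕ → ℝ → ℝ≥0∞ := fun n x => (‖g n x‖₊ : ℝ≥0∞) ^ (2:ℝ) with hF
  have hFm : ∀ n, AEMeasurable (F n) volume := by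
    intro n
    have hchi : Measurable fun x => chi (tau n) x - 1 := by
      have : Measurable (chi (tau n)) :=
        (measurable_const.indicator measurableSet_Ioo)
      exact this.sub measurable_const
    have hgm : AEStronglyMeasurable (g n) volume := by
      refine AEStronglyMeasurable.mul ?_ (Lp.aestronglyMeasurable f)
      exact hchi.aestronglyMeasurable
    exact hgm.enorm.pow aemeasurable_const
  have hbound : ∀ n, F n ≤ᵐ[volume] fun x => (‖(f : ℝ → ℂ) x‖₊ : ℝ≥0∞) ^ (2:ℝ) := by
    intro n
    refine Filter.Eventually.of_forall fun x => ?_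
    have h1 : ‖g n x‖ ≤ ‖(f : ℝ → ℂ) x‖ := by
      rw [hg, norm_mul]
      have h2 : ‖chi (tau n) x - 1‖ ≤ 1 := by
        rw [chi, Set.indicator]
        split <;> simp
      calc ‖chi (tau n) x - 1‖ * ‖(f : ℝ → ℂ) x‖ ≤ 1 * ‖(f : ℝ → ℂ) x‖ :=
          mul_le_mul_of_nonneg_right h2 (norm_nonneg _)
      _ = _ := one_mul _
    refine ENNReal.rpow_le_rpow ?_ (by norm_num)
    exact_mod_cast h1
  have hfin : (∫⁻ x, (‖(f : ℝ → ℂ) x‖₊ : ℝ≥0∞) ^ (2:ℝ) ∂volume) ≠ ⊤ := by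
    have h := lintegral_rpow_enorm_lt_top_of_eLpNorm_lt_top (f := (f : ℝ → ℂ))
      (p := 2) (by norm_num) (by norm_num) (Lp.eLpNorm_lt_top f)
    have h2 : (2 : ℝ≥0∞).toReal = (2:ℝ) := by simp
    rw [h2] at h
    exact h.ne
  have hlim : ∀ᵐ x ∂(volume : Measure ℝ),
      Filter.Tendsto (fun n => F n x) Filter.atTop (nhds 0) := by
    refine Filter.Eventually.of_forall fun x => ?_
    have hev : ∀ᶠ n in Filter.atTop, F n x = 0 := by
      filter_upwards [htau.eventually_gt_atTop (|x|)] with n hn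
      have hx : x ∈ Set.Ioo (-(tau n)) (tau n) := by
        constructor
        · have := abs_le.1 hn.le |>.1
          nlinarith [neg_abs_le x, le_abs_self x]
        · nlinarith [neg_abs_le x, le_abs_self x]
      have hchi1 : chi (tau n) x = 1 := by
        rw [chi, Set.indicator_of_mem hx]; rfl
      show (‖(chi (tau n) x - 1) * (f : ℝ → ℂ) x‖₊ : ℝ≥0∞) ^ (2:ℝ) = 0
      rw [hchi1]
      simp
    refine Filter.Tendsto.congr' ?_ tendsto_const_nhds
    filter_upwards [hev] with n h
    exact h.symm
  have hI : Filter.Tendsto (fun n => ∫⁻ x, F n x ∂volume) Filter.atTop (nhds 0) := by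
    have := tendsto_lintegral_of_dominated_convergence' (F := F)
      (f := fun _ => (0:ℝ≥0∞)) _ hFm hbound hfin hlim
    simpa using this
  have hel : Filter.Tendsto (fun n => eLpNorm (g n) 2 volume) Filter.atTop (nhds 0) := by
    have heq : ∀ n, eLpNorm (g n) 2 volume = (∫⁻ x, F n x ∂volume) ^ (1/2 : ℝ) := by
      intro n
      rw [eLpNorm_eq_lintegral_rpow_enorm_toReal (by norm_num) (by norm_num)]
      have h2 : (2 : ℝ≥0∞).toReal = (2:ℝ) := by simp
      rw [h2]
      rfl
    have hcont := (ENNReal.continuous_rpow_const (y := (1/2 : ℝ))).tendsto 0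
    have := hcont.comp hI
    rw [ENNReal.zero_rpow_of_pos (by norm_num)] at this
    refine Filter.Tendsto.congr ?_ this
    intro n
    rw [heq n]
    rfl
  have := (ENNReal.tendsto_toReal (a := 0) (by simp)).comp hel
  refine Filter.Tendsto.congr ?_ (by simpa using this)
  intro n
  rw [hnorm n]
  rfl
end Projection
section StrongLimits
set_option maxHeartbeats 1000000

lemma squeeze_tendsto_zero {f : ℕ → L2} {g : ℕ → ℝ}
    (h : ∀ᶠ n in Filter.atTop, ‖f n‖ ≤ g n)
    (hg : Filter.Tendsto g Filter.atTop (nhds 0)) :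
    Filter.Tendsto f Filter.atTop (nhds 0) :=
  squeeze_zero_norm' h hg

lemma tendsto_apply_of_strong {S : ℕ → L2op} {T : L2op} {v : ℕ → L2} {y : L2} {C : ℝ}
    (hS : ∀ f : L2, Filter.Tendsto (fun n => S n f) Filter.atTop (nhds (T f)))
    (hC : ∀ᶠ n in Filter.atTop, ‖S n‖ ≤ C)
    (hv : Filter.Tendsto v Filter.atTop (nhds y)) :
    Filter.Tendsto (fun n => S n (v n)) Filter.atTop (nhds (T y)) := by
  have key : Filter.Tendsto (fun n => S n (v n) - T y) Filter.atTop (nhds 0) := by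
    refine squeeze_zero_norm' (a := fun n => C * ‖v n - y‖ + ‖S n y - T y‖) ?_ ?_
    · filter_upwards [hC] with n hn
      have heq : S n (v n) - T y = S n (v n - y) + (S n y - T y) := by
        rw [map_sub]; abel
      rw [heq]
      have h1 : ‖S n (v n - y)‖ ≤ C * ‖v n - y‖ := by
        calc ‖S n (v n - y)‖ ≤ ‖S n‖ * ‖v n - y‖ := (S n).le_opNorm _
        _ ≤ C * ‖v n - y‖ := mul_le_mul_of_nonneg_right hn (norm_nonneg _)
      calc ‖S n (v n - y) + (S n y - T y)‖ ≤ ‖S n (v n - y)‖ + ‖S n y - T y‖ :=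
          norm_add_le _ _
      _ ≤ C * ‖v n - y‖ + ‖S n y - T y‖ := add_le_add h1 le_rfl
    · have h1 : Filter.Tendsto (fun n => ‖v n - y‖) Filter.atTop (nhds 0) := by
        rw [← tendsto_iff_norm_sub_tendsto_zero]; exact hv
      have h2 : Filter.Tendsto (fun n => ‖S n y - T y‖) Filter.atTop (nhds 0) := by
        rw [← tendsto_iff_norm_sub_tendsto_zero]; exact hS y
      have := (h1.const_mul C).add h2
      simpa using this
  exact tendsto_sub_nhds_zero_iff.1 key

/-- Part 2: a point of strong convergence is a regular value of `T`. -/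
lemma regular_of_mem_nablaS {T : L2op} {S : ℕ → L2op} {C : ℝ}
    (hSstrong : ∀ f : L2, Filter.Tendsto (fun n => S n f) Filter.atTop (nhds (T f)))
    (hSbdd : ∀ᶠ n in Filter.atTop, ‖S n‖ ≤ C)
    {z : ℂ} (hz : z ∈ nablaS S) : z ∈ regularSet T := by
  obtain ⟨⟨hz0, M, hM, N, hN⟩, hstrong⟩ := hz
  have hgsel : ∀ f : L2, ∃ g : L2,
      Filter.Tendsto (fun n => fres (S n) z f) Filter.atTop (nhds g) := hstrong
  choose phi hphi using hgsel
  set G : ℕ → L2op := fun k => fres (S (k + (N+1))) z with hG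
  have hGN : ∀ k : ℕ, z ∈ regularSet (S (k + (N+1))) ∧ ‖fres (S (k + (N+1))) z‖ ≤ M :=
    fun k => hN (k + (N+1)) (by omega)
  have hGb : Bornology.IsBounded (Set.range G) := by
    rw [isBounded_iff_forall_norm_le]
    exact ⟨M, by rintro y ⟨k, rfl⟩; exact (hGN k).2⟩
  have hGf : ∀ f : L2, Filter.Tendsto (fun k => G k f) Filter.atTop (nhds (phi f)) := by
    intro f
    have := (hphi f).comp (tendsto_add_atTop_nat (N+1))
    exact this
  set A : L2op := ContinuousLinearMap.ofTendstoOfBoundedRange phi G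
    (tendsto_pi_nhds.2 hGf) hGb with hA
  have hAapp : ∀ f, Filter.Tendsto (fun k => G k f) Filter.atTop (nhds (A f)) := by
    intro f
    have : A f = phi f := rfl
    rw [this]; exact hGf f
  have hAbdd : ∀ᶠ k in Filter.atTop, ‖G k‖ ≤ M :=
    Filter.Eventually.of_forall fun k => (hGN k).2
  -- finite-level operator identities
  have hop : ∀ k : ℕ,
      (1 - z • S (k + (N+1))) * (1 + z • G k) = 1 ∧
      (1 + z • G k) * (1 - z • S (k + (N+1))) = 1 := by
    intro k
    have hu : IsUnit (1 - z • S (k + (N+1))) := (hGN k).1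
    have hid := unit_inv_identities hu
    have hGeq : z • G k = (z • S (k + (N+1))) * Ring.inverse (1 - z • S (k + (N+1))) := by
      rw [hG]
      show z • (S (k + (N+1)) * res (S (k + (N+1))) z) = _
      rw [res, smul_mul_assoc]
    rw [hGeq]
    exact hid
  -- shifted strong convergence of S
  have hSsh : ∀ f : L2, Filter.Tendsto (fun k => S (k + (N+1)) f) Filter.atTop (nhds (T f)) :=
    fun f => (hSstrong f).comp (tendsto_add_atTop_nat (N+1))
  have hSbsh : ∀ᶠ k in Filter.atTop, ‖S (k + (N+1))‖ ≤ C := by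
    rw [Filter.eventually_atTop] at hSbdd ⊢
    obtain ⟨N2, hN2⟩ := hSbdd
    exact ⟨N2, fun k hk => hN2 _ (by omega)⟩
  -- identity 1 : (1 - z•T) * (1 + z•A) = 1
  have hid1 : (1 - z • T) * (1 + z • A) = 1 := by
    refine ContinuousLinearMap.ext fun v => ?_
    simp only [ContinuousLinearMap.mul_apply, ContinuousLinearMap.one_apply]
    have hgk : Filter.Tendsto (fun k => v + z • (G k v)) Filter.atTop
        (nhds (v + z • (A v))) := by
      exact tendsto_const_nhds.add ((hAapp v).const_smul z)
    have happly : ∀ k, (1 - z • S (k + (N+1))) (v + z • (G k v)) = v := by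
      intro k
      have := congrArg (fun W : L2op => W v) (hop k).1
      simpa [ContinuousLinearMap.mul_apply] using this
    have hlim : Filter.Tendsto
        (fun k => (1 - z • S (k + (N+1))) (v + z • (G k v))) Filter.atTop
        (nhds ((1 - z • T) (v + z • (A v)))) := by
      have h1 : Filter.Tendsto (fun k => S (k + (N+1)) (v + z • (G k v))) Filter.atTop
          (nhds (T (v + z • (A v)))) :=
        tendsto_apply_of_strong hSsh hSbsh hgk
      have h2 : ∀ k, (1 - z • S (k + (N+1))) (v + z • (G k v))
          = (v + z • (G k v)) - z • (S (k + (N+1)) (v + z • (G k v))) := by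
        intro k; simp
      have h3 : (1 - z • T) (v + z • (A v))
          = (v + z • (A v)) - z • (T (v + z • (A v))) := by simp
      rw [h3]
      refine Filter.Tendsto.congr (fun k => (h2 k).symm) ?_
      exact hgk.sub (h1.const_smul z)
    have hconst : Filter.Tendsto
        (fun _ : ℕ => v) Filter.atTop (nhds v) := tendsto_const_nhds
    have := tendsto_nhds_unique (Filter.Tendsto.congr (fun k => (happly k).symm) hconst) hlim
    exact this.symm
  -- identity 2 : (1 + z•A) * (1 - z•T) = 1
  have hid2 : (1 + z • A) * (1 - z • T) = 1 := by
    refine ContinuousLinearMap.ext fun v => ?_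
    simp only [ContinuousLinearMap.mul_apply, ContinuousLinearMap.one_apply]
    have hhk : Filter.Tendsto (fun k => (1 - z • S (k + (N+1))) v) Filter.atTop
        (nhds ((1 - z • T) v)) := by
      have h1 : Filter.Tendsto (fun k => S (k + (N+1)) v) Filter.atTop (nhds (T v)) := hSsh v
      have h2 : ∀ k, (1 - z • S (k + (N+1))) v = v - z • (S (k + (N+1)) v) := by
        intro k; simp
      have h3 : (1 - z • T) v = v - z • (T v) := by simp
      rw [h3]
      exact Filter.Tendsto.congr (fun k => (h2 k).symm)
        (tendsto_const_nhds.sub (h1.const_smul z))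
    have happly : ∀ k, ((1 - z • S (k + (N+1))) v) + z • (G k ((1 - z • S (k + (N+1))) v)) = v := by
      intro k
      have := congrArg (fun W : L2op => W v) (hop k).2
      simpa [ContinuousLinearMap.mul_apply] using this
    have hGlim : Filter.Tendsto (fun k => G k ((1 - z • S (k + (N+1))) v)) Filter.atTop
        (nhds (A ((1 - z • T) v))) :=
      tendsto_apply_of_strong hAapp hAbdd hhk
    have hlim : Filter.Tendsto
        (fun k => ((1 - z • S (k + (N+1))) v) + z • (G k ((1 - z • S (k + (N+1))) v)))
        Filter.atTop (nhds ((1 - z • T) v + z • (A ((1 - z • T) v)))) :=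
      hhk.add (hGlim.const_smul z)
    have hconst : Filter.Tendsto (fun _ : ℕ => v) Filter.atTop (nhds v) := tendsto_const_nhds
    have := tendsto_nhds_unique (Filter.Tendsto.congr (fun k => (happly k).symm) hconst) hlim
    have h4 : (1 - z • T) v + z • (A ((1 - z • T) v)) = v := this.symm
    calc ((1 : L2op) + z • A) ((1 - z • T) v)
        = (1 - z • T) v + z • (A ((1 - z • T) v)) := by simp
    _ = v := h4
  exact isUnit_of_left_right hid1 hid2
end StrongLimits
section Part1
set_option maxHeartbeats 2000000

lemma norm_one_L2op : ‖(1 : L2op)‖ ≤ 1 := by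
  rw [ContinuousLinearMap.one_def]; exact ContinuousLinearMap.norm_id_le

lemma L2op_norm_smul (c : ℂ) (A : L2op) : ‖c • A‖ = ‖c‖ * ‖A‖ := norm_smul c A

lemma perturb_unit {T R : L2op} {lam e : ℂ} (hu : IsUnit (1 - lam • T))
    (hR : R = Ring.inverse (1 - lam • T)) (he : ‖e • (R * T)‖ ≤ 1/2) :
    IsUnit (1 - (lam + e) • T) ∧ ‖Ring.inverse (1 - (lam + e) • T)‖ ≤ 2 * ‖R‖ := by
  set w : L2op := e • (R * T) with hw
  have hwlt : ‖w‖ < 1 := lt_of_le_of_lt he (by norm_num)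
  have hv : IsUnit ((1:L2op) - w) := ⟨Units.oneSub w hwlt, rfl⟩
  have hRl : (1 - lam • T) * R = 1 := by rw [hR]; exact Ring.mul_inverse_cancel _ hu
  have hfactor : (1 - lam • T) * (1 - w) = 1 - (lam + e) • T := by
    have h2 : (1 - lam • T) * w = e • T := by
      rw [hw, mul_smul_comm, ← mul_assoc, hRl, one_mul]
    calc (1 - lam • T) * (1 - w) = (1 - lam • T) - (1 - lam • T) * w := by noncomm_ring
    _ = 1 - lam • T - e • T := by rw [h2]
    _ = 1 - (lam + e) • T := by rw [add_smul]; abel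
  have hu2 : IsUnit (1 - (lam + e) • T) := hfactor ▸ hu.mul hv
  have hinv : Ring.inverse (1 - (lam + e) • T) = Ring.inverse (1 - w) * R := by
    refine ringInverse_eq_of_mul hu2 ?_
    rw [← hfactor]
    calc ((1 - lam • T) * (1 - w)) * (Ring.inverse (1 - w) * R)
        = (1 - lam • T) * (((1 - w) * Ring.inverse (1 - w)) * R) := by
          rw [mul_assoc, mul_assoc]
    _ = 1 := by rw [Ring.mul_inverse_cancel _ hv, one_mul, hRl]
  have hnv : ‖Ring.inverse ((1:L2op) - w)‖ ≤ 2 := by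
    have h3 : (1 : L2op) - w = 1 + (-w) := by rw [sub_eq_add_neg]
    rw [h3]
    refine norm_ringInverse_one_add_le norm_one_L2op ?_ ?_
    · rw [← h3]; exact hv
    · rw [norm_neg]; exact he
  refine ⟨hu2, ?_⟩
  rw [hinv]
  calc ‖Ring.inverse ((1:L2op) - w) * R‖ ≤ ‖Ring.inverse ((1:L2op) - w)‖ * ‖R‖ :=
      norm_mul_le _ _
  _ ≤ 2 * ‖R‖ := mul_le_mul_of_nonneg_right hnv (norm_nonneg _)

lemma mem_nablaS_of_regular
    (T : L2op) (tau : ℕ → ℝ) (P : ℕ → L2op) (b : ℕ → ℂ)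
    (hproj : ∀ n, ∀ f : L2, (P n f : ℝ → ℂ) =ᵐ[volume] fun x => chi (tau n) x * (f : ℝ → ℂ) x)
    (htau : Filter.Tendsto tau Filter.atTop Filter.atTop)
    (hnuc : ∀ n, IsNuclear (P n * T))
    (m : ℕ)
    (hconv : Filter.Tendsto (fun n => ‖(T - P n * T) * (P n * T) ^ m‖) Filter.atTop (nhds 0))
    (hb : Filter.Tendsto b Filter.atTop (nhds 0))
    {lam : ℂ} (hreg : lam ∈ regularSet T) (hlam : lam ≠ 0) :
    lam ∈ nablaS (fun n => b n • (1 : L2op) + P n * T) := by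
  have hu : IsUnit (1 - lam • T) := hreg
  set R : L2op := Ring.inverse (1 - lam • T) with hRdef
  set CR : ℝ := ‖R‖ with hCR
  set CT : ℝ := ‖T‖ with hCT
  set Tn : ℕ → L2op := fun n => P n * T with hTndef
  set S : ℕ → L2op := fun n => b n • (1 : L2op) + Tn n with hSdef
  have hTn_norm : ∀ n, ‖Tn n‖ ≤ CT := by
    intro n
    calc ‖Tn n‖ ≤ ‖P n‖ * ‖T‖ := norm_mul_le _ _
    _ ≤ 1 * ‖T‖ := mul_le_mul_of_nonneg_right (Pn_opNorm_le (hproj n)) (norm_nonneg _)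
    _ = CT := one_mul _
  set μ : ℕ → ℂ := fun n => lam * (1 - lam * b n)⁻¹ with hμdef
  have hbc : Filter.Tendsto (fun n => lam * b n) Filter.atTop (nhds 0) := by
    have := hb.const_mul lam
    simpa using this
  have hs : Filter.Tendsto (fun n => 1 - lam * b n) Filter.atTop (nhds 1) := by
    have h := Filter.Tendsto.sub (tendsto_const_nhds (x := (1:ℂ)) (f := Filter.atTop)) hbc
    simpa using h
  have hμ : Filter.Tendsto μ Filter.atTop (nhds lam) := by
    have h1 := hs.inv₀ one_ne_zero
    have h2 := h1.const_mul lam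
    simpa using h2
  -- eventual facts
  have hev_s : ∀ᶠ n in Filter.atTop, ‖lam * b n‖ ≤ 1/2 := by
    have := hbc.norm
    simp only [norm_zero] at this
    filter_upwards [this.eventually_lt_const (show (0:ℝ) < 1/2 by norm_num)] with n hn
    exact hn.le
  have hev_e : ∀ᶠ n in Filter.atTop, ‖(μ n - lam) • (R * T)‖ ≤ 1/2 := by
    have h1 : Filter.Tendsto (fun n => ‖μ n - lam‖ * ‖R * T‖) Filter.atTop (nhds 0) := by
      have h2 := (hμ.sub_const lam).norm
      simp only [sub_self, norm_zero] at h2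
      have h3 := h2.mul_const ‖R * T‖
      rw [zero_mul] at h3
      exact h3
    filter_upwards [h1.eventually_lt_const (show (0:ℝ) < 1/2 by norm_num)] with n hn
    rw [L2op_norm_smul]
    exact hn.le
  have hev_mu : ∀ᶠ n in Filter.atTop, ‖μ n‖ ≤ ‖lam‖ + 1 := by
    filter_upwards [hμ.norm.eventually_lt_const (show ‖lam‖ < ‖lam‖ + 1 by linarith)] with n hn
    exact hn.le
  set Q : ℝ := (‖lam‖ + 1) * CT + 1 with hQdef
  have hQ1 : 1 ≤ Q := by
    have h1 : 0 ≤ ‖lam‖ := norm_nonneg _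
    have h2 : (0:ℝ) ≤ CT := norm_nonneg _
    nlinarith
  have hQ0 : 0 ≤ Q := by linarith
  have hCR0 : 0 ≤ CR := norm_nonneg _
  set CB : ℝ := (m : ℝ) * Q^m + (2*CR+1) * Q^m with hCBdef
  have hQm0 : 0 ≤ Q ^ m := by positivity
  have hCB0 : 0 ≤ CB := by
    have : (0:ℝ) ≤ (m:ℝ) := Nat.cast_nonneg m
    nlinarith
  set c0 : ℝ := (‖lam‖+1)^(m+1) * (2*CR+1) with hc0def
  have hc00 : 0 ≤ c0 := by positivity
  have hev_D : ∀ᶠ n in Filter.atTop, c0 * ‖(T - Tn n) * (Tn n) ^ m‖ ≤ 1/2 := by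
    have h1 := hconv.const_mul c0
    simp only [mul_zero] at h1
    filter_upwards [h1.eventually_lt_const (show (0:ℝ) < 1/2 by norm_num)] with n hn
    exact hn.le
  have hev_b1 : ∀ᶠ n in Filter.atTop, ‖b n‖ ≤ 1 := by
    have := hb.norm
    simp only [norm_zero] at this
    filter_upwards [this.eventually_lt_const one_pos] with n hn
    exact hn.le
  -- the main eventual claim
  have hmain : ∀ᶠ n in Filter.atTop,
      IsUnit (1 - lam • S n) ∧ ‖res (S n) lam‖ ≤ 2 * (2 * CB) ∧ ‖S n‖ ≤ 1 + CT := by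
    filter_upwards [hev_s, hev_e, hev_mu, hev_D, hev_b1] with n h1 h2 h3 h4 h5
    -- scalar facts
    have hsne : (1:ℂ) - lam * b n ≠ 0 := by
      intro h0
      have : lam * b n = 1 := by
        have := sub_eq_zero.1 h0
        exact this.symm
      rw [this, norm_one] at h1
      norm_num at h1
    have hs_lb : 1/2 ≤ ‖(1:ℂ) - lam * b n‖ := by
      have := norm_sub_norm_le (1:ℂ) (lam * b n)
      rw [norm_one] at this
      linarith
    have hs_pos : 0 < ‖(1:ℂ) - lam * b n‖ := by linarith
    have hsinv : ‖((1:ℂ) - lam * b n)⁻¹‖ ≤ 2 := by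
      rw [norm_inv]
      have h6 : ‖(1:ℂ) - lam * b n‖⁻¹ * ‖(1:ℂ) - lam * b n‖ = 1 :=
        inv_mul_cancel₀ (ne_of_gt hs_pos)
      nlinarith [inv_nonneg.2 hs_pos.le]
    -- perturbation: 1 - μ n • T is a unit
    have hμeq : lam + (μ n - lam) = μ n := by ring
    have hpert := perturb_unit (T := T) hu hRdef (e := μ n - lam) h2
    rw [hμeq] at hpert
    obtain ⟨hun, hRn_norm⟩ := hpert
    set rn : L2op := Ring.inverse (1 - μ n • T) with hrndef
    have hrn : rn * (1 - μ n • T) = 1 := Ring.inverse_mul_cancel _ hun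
    set β : L2op := μ n • Tn n with hβdef
    have hβ_norm : ‖β‖ ≤ Q := by
      rw [hβdef, L2op_norm_smul]
      have := hTn_norm n
      have h7 : ‖μ n‖ * ‖Tn n‖ ≤ (‖lam‖+1) * CT := by
        refine mul_le_mul h3 this (norm_nonneg _) (by linarith [norm_nonneg lam])
      linarith
    have hβpow : ∀ j, j ≤ m → ‖β ^ j‖ ≤ Q ^ m := by
      intro j hj
      rcases Nat.eq_zero_or_pos j with h | h
      · rw [h, pow_zero]
        calc ‖(1:L2op)‖ ≤ 1 := norm_one_L2op
        _ ≤ Q ^ m := one_le_pow₀ hQ1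
      · calc ‖β ^ j‖ ≤ ‖β‖ ^ j := norm_pow_le' β h
        _ ≤ Q ^ j := pow_le_pow_left₀ (norm_nonneg _) hβ_norm j
        _ ≤ Q ^ m := pow_le_pow_right₀ hQ1 hj
    set Bop : L2op := (∑ j ∈ Finset.range m, β ^ j) + rn * β ^ m with hBopdef
    have hBop_norm : ‖Bop‖ ≤ CB := by
      have hsum : ‖∑ j ∈ Finset.range m, β ^ j‖ ≤ (m : ℝ) * Q ^ m := by
        calc ‖∑ j ∈ Finset.range m, β ^ j‖ ≤ ∑ j ∈ Finset.range m, ‖β ^ j‖ :=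
            norm_sum_le _ _
        _ ≤ ∑ _j ∈ Finset.range m, Q ^ m := by
            refine Finset.sum_le_sum fun j hj => hβpow j (Finset.mem_range.1 hj).le
        _ = (m : ℝ) * Q ^ m := by
            rw [Finset.sum_const, Finset.card_range, nsmul_eq_mul]
      have hmul : ‖rn * β ^ m‖ ≤ (2*CR+1) * Q ^ m := by
        calc ‖rn * β ^ m‖ ≤ ‖rn‖ * ‖β ^ m‖ := norm_mul_le _ _
        _ ≤ (2*CR) * Q ^ m := by
            refine mul_le_mul hRn_norm (hβpow m le_rfl) (norm_nonneg _) (by linarith)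
        _ ≤ (2*CR+1) * Q ^ m := by nlinarith
      calc ‖Bop‖ ≤ ‖∑ j ∈ Finset.range m, β ^ j‖ + ‖rn * β ^ m‖ := norm_add_le _ _
      _ ≤ CB := by rw [hCBdef]; linarith
    have hid := ringid (μ n • T) β rn hrn m
    set En : L2op := rn * ((μ n • T - β) * β ^ m) with hEndef
    have hprod : (μ n • T - β) * β ^ m = (μ n ^ (m+1)) • ((T - Tn n) * (Tn n) ^ m) := by
      calc (μ n • T - β) * β ^ m
          = (μ n • (T - Tn n)) * ((μ n) ^ m • (Tn n) ^ m) := by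
            rw [hβdef, smul_sub, smul_pow]
      _ = μ n • ((T - Tn n) * ((μ n) ^ m • (Tn n) ^ m)) := by rw [smul_mul_assoc]
      _ = μ n • ((μ n) ^ m • ((T - Tn n) * (Tn n) ^ m)) := by rw [mul_smul_comm]
      _ = (μ n ^ (m+1)) • ((T - Tn n) * (Tn n) ^ m) := by
          rw [smul_smul, ← pow_succ']
    have hEnorm : ‖En‖ ≤ 1/2 := by
      have h9 : ‖En‖ ≤ ‖rn‖ * (‖μ n‖^(m+1) * ‖(T - Tn n) * (Tn n) ^ m‖) := by
        refine le_trans (norm_mul_le _ _) ?_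
        refine mul_le_mul_of_nonneg_left ?_ (norm_nonneg _)
        rw [hprod, L2op_norm_smul, norm_pow]
      have h10 : ‖μ n‖^(m+1) ≤ (‖lam‖+1)^(m+1) := pow_le_pow_left₀ (norm_nonneg _) h3 _
      have hD0 : 0 ≤ ‖(T - Tn n) * (Tn n) ^ m‖ := norm_nonneg _
      have h11 : ‖rn‖ * (‖μ n‖^(m+1) * ‖(T - Tn n) * (Tn n) ^ m‖)
          ≤ c0 * ‖(T - Tn n) * (Tn n) ^ m‖ := by
        have h12 : ‖rn‖ ≤ 2*CR+1 := by linarith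
        have h14 : 0 ≤ ‖μ n‖^(m+1) * ‖(T - Tn n) * (Tn n) ^ m‖ := by positivity
        calc ‖rn‖ * (‖μ n‖^(m+1) * ‖(T - Tn n) * (Tn n) ^ m‖)
            ≤ (2*CR+1) * (‖μ n‖^(m+1) * ‖(T - Tn n) * (Tn n) ^ m‖) :=
              mul_le_mul_of_nonneg_right h12 h14
        _ ≤ (2*CR+1) * ((‖lam‖+1)^(m+1) * ‖(T - Tn n) * (Tn n) ^ m‖) := by
              refine mul_le_mul_of_nonneg_left ?_ (by linarith)
              exact mul_le_mul_of_nonneg_right h10 hD0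
        _ = c0 * ‖(T - Tn n) * (Tn n) ^ m‖ := by rw [hc0def]; ring
      linarith
    have hEu : IsUnit ((1:L2op) + En) := by
      have hlt : ‖-En‖ < 1 := by rw [norm_neg]; linarith
      have : IsUnit ((1:L2op) - (-En)) := ⟨Units.oneSub (-En) hlt, rfl⟩
      rwa [sub_neg_eq_add] at this
    have hEinv : ‖Ring.inverse ((1:L2op) + En)‖ ≤ 2 :=
      norm_ringInverse_one_add_le norm_one_L2op hEu hEnorm
    set Lop : L2op := Ring.inverse ((1:L2op) + En) * Bop with hLopdef
    have hLeft : Lop * (1 - β) = 1 := by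
      rw [hLopdef, hBopdef, mul_assoc, hid]
      exact Ring.inverse_mul_cancel _ hEu
    have hcomp : IsCompactOperator (⇑β) := by
      have h14 := isCompactOperator_of_isNuclear (hnuc n)
      have h15 : ⇑β = μ n • (⇑(Tn n)) := by
        rw [hβdef]; rfl
      rw [h15]
      exact h14.smul (μ n)
    have hUβ : IsUnit ((1:L2op) - β) := isUnit_one_sub_of_compact_of_leftInv hcomp hLeft
    have hinvβ : Ring.inverse ((1:L2op) - β) = Lop := ringInverse_eq_of_mul' hUβ hLeft
    have hinvβ_norm : ‖Ring.inverse ((1:L2op) - β)‖ ≤ 2 * CB := by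
      rw [hinvβ, hLopdef]
      calc ‖Ring.inverse ((1:L2op) + En) * Bop‖
          ≤ ‖Ring.inverse ((1:L2op) + En)‖ * ‖Bop‖ := norm_mul_le _ _
      _ ≤ 2 * CB := mul_le_mul hEinv hBop_norm (norm_nonneg _) (by norm_num)
    -- scalar factorization
    set sn : ℂ := 1 - lam * b n with hsndef
    have hsμ : sn * μ n = lam := by
      rw [hsndef, hμdef]
      field_simp
      exact div_self hsne
    have hexp : lam • S n = (lam * b n) • (1:L2op) + lam • Tn n := by
      rw [hSdef]
      show lam • (b n • (1:L2op) + Tn n) = _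
      rw [smul_add, smul_smul]
    have hfac : 1 - lam • S n = sn • ((1:L2op) - β) := by
      have hrhs : sn • ((1:L2op) - β) = sn • (1:L2op) - lam • Tn n := by
        rw [smul_sub, hβdef, smul_smul, hsμ]
      have hsn1 : sn • (1:L2op) = 1 - (lam * b n) • (1:L2op) := by
        rw [hsndef, sub_smul, one_smul]
      rw [hrhs, hsn1, hexp]
      abel
    have hsu1 : IsUnit (sn • (1:L2op)) := by
      have halg : sn • (1:L2op) = algebraMap ℂ L2op sn :=
        (Algebra.algebraMap_eq_smul_one sn).symm
      rw [halg]
      exact (IsUnit.mk0 sn hsne).map (algebraMap ℂ L2op)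
    have hsmulfac : sn • ((1:L2op) - β) = (sn • (1:L2op)) * ((1:L2op) - β) := by
      rw [smul_mul_assoc, one_mul]
    have hSu : IsUnit (1 - lam • S n) := by
      rw [hfac, hsmulfac]
      exact hsu1.mul hUβ
    have hres_eq : res (S n) lam = sn⁻¹ • Ring.inverse ((1:L2op) - β) := by
      rw [res]
      refine ringInverse_eq_of_mul hSu ?_
      rw [hfac, hsmulfac]
      calc ((sn • (1:L2op)) * ((1:L2op) - β)) * (sn⁻¹ • Ring.inverse ((1:L2op) - β))
          = (sn • (1:L2op)) * (((1:L2op) - β) * (sn⁻¹ • Ring.inverse ((1:L2op) - β))) := by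
            rw [mul_assoc]
      _ = (sn • (1:L2op)) * (sn⁻¹ • (((1:L2op) - β) * Ring.inverse ((1:L2op) - β))) := by
            rw [mul_smul_comm]
      _ = (sn • (1:L2op)) * (sn⁻¹ • (1:L2op)) := by
            rw [Ring.mul_inverse_cancel _ hUβ]
      _ = (sn * sn⁻¹) • ((1:L2op) * (1:L2op)) := by
            rw [smul_mul_assoc, mul_smul_comm, smul_smul]
      _ = 1 := by rw [mul_inv_cancel₀ hsne, one_smul, one_mul]
    have hres_norm : ‖res (S n) lam‖ ≤ 2 * (2 * CB) := by
      rw [hres_eq, L2op_norm_smul]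
      exact mul_le_mul hsinv hinvβ_norm (norm_nonneg _) (by norm_num)
    have hSn_norm : ‖S n‖ ≤ 1 + CT := by
      rw [hSdef]
      show ‖b n • (1:L2op) + Tn n‖ ≤ 1 + CT
      calc ‖b n • (1:L2op) + Tn n‖ ≤ ‖b n • (1:L2op)‖ + ‖Tn n‖ := norm_add_le _ _
      _ ≤ ‖b n‖ * ‖(1:L2op)‖ + CT := by
          refine add_le_add (le_of_eq (L2op_norm_smul _ _)) (hTn_norm n)
      _ ≤ 1 * 1 + CT := by
          refine add_le_add ?_ le_rfl
          refine mul_le_mul h5 norm_one_L2op (norm_nonneg _) zero_le_one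
      _ = 1 + CT := by ring
    exact ⟨hSu, hres_norm, hSn_norm⟩
  -- strong convergence of S n
  have hstrongS : ∀ v : L2, Filter.Tendsto (fun n => S n v) Filter.atTop (nhds (T v)) := by
    intro v
    have h1 := Pn_tendsto_strongly hproj htau (T v)
    have h2 : Filter.Tendsto (fun n => b n • v) Filter.atTop (nhds 0) := by
      have := hb.smul_const v
      simpa using this
    have h3 : ∀ n, S n v = b n • v + P n (T v) := by
      intro n
      rw [hSdef]
      simp [hTndef]
    have h4 := h2.add h1
    rw [zero_add] at h4
    exact Filter.Tendsto.congr (fun n => (h3 n).symm) h4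
  set M : ℝ := (1 + CT) * (2 * (2 * CB)) + 1 with hMdef
  have hCT0 : (0:ℝ) ≤ CT := norm_nonneg _
  have hM : 0 < M := by nlinarith
  obtain ⟨N, hN⟩ := Filter.eventually_atTop.1 hmain
  refine ⟨⟨hlam, M, hM, N, ?_⟩, ?_⟩
  · intro n hn
    obtain ⟨hSu, hres_norm, hSn_norm⟩ := hN n hn.le
    refine ⟨hSu, ?_⟩
    calc ‖fres (S n) lam‖ ≤ ‖S n‖ * ‖res (S n) lam‖ := norm_mul_le _ _
    _ ≤ (1 + CT) * (2 * (2 * CB)) := by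
        refine mul_le_mul hSn_norm hres_norm (norm_nonneg _) (by linarith)
    _ ≤ M := by rw [hMdef]; linarith
  · intro f
    refine ⟨fres T lam f, ?_⟩
    have hRT : (1 - lam • T) * R = 1 := Ring.mul_inverse_cancel _ hu
    have hfT : fres T lam f = T (R f) := rfl
    set eps : ℕ → ℝ := fun n => ‖S n (R f) - T (R f)‖ with hepsdef
    have heps : Filter.Tendsto eps Filter.atTop (nhds 0) := by
      have := hstrongS (R f)
      rw [tendsto_iff_norm_sub_tendsto_zero] at this
      exact this
    set c1 : ℝ := (1 + CT) * (‖lam‖ * (2 * (2 * CB))) + 1 with hc1def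
    have key : Filter.Tendsto (fun n => fres (S n) lam f - fres T lam f)
        Filter.atTop (nhds 0) := by
      refine squeeze_zero_norm' (a := fun n => c1 * eps n) ?_ ?_
      · filter_upwards [hmain] with n hn
        obtain ⟨hSu, hres_norm, hSn_norm⟩ := hn
        set Rn : L2op := res (S n) lam with hRndef
        have hA1 : (1 - lam • S n) (Rn f) = f := by
          have := congrArg (fun W : L2op => W f) (Ring.mul_inverse_cancel _ hSu)
          simpa [hRndef, res] using this
        have hA2 : ∀ x : L2, Rn ((1 - lam • S n) x) = x := by
          intro x
          have := congrArg (fun W : L2op => W x) (Ring.inverse_mul_cancel _ hSu)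
          simpa [hRndef, res] using this
        have hA3 : (1 - lam • T) (R f) = f := by
          have := congrArg (fun W : L2op => W f) hRT
          simpa using this
        have hA4 : (1 - lam • S n) (Rn f - R f) = lam • (S n (R f) - T (R f)) := by
          rw [map_sub, hA1]
          have h5 : (1 - lam • S n) (R f) = R f - lam • (S n (R f)) := by
            simp only [ContinuousLinearMap.sub_apply, ContinuousLinearMap.smul_apply,
              ContinuousLinearMap.one_apply]
          have h6 : R f - lam • (T (R f)) = f := by
            have h6' : (1 - lam • T) (R f) = R f - lam • (T (R f)) := by
              simp only [ContinuousLinearMap.sub_apply, ContinuousLinearMap.smul_apply,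
                ContinuousLinearMap.one_apply]
            rw [← h6', hA3]
          rw [h5, smul_sub]
          nth_rewrite 1 [← h6]
          exact sub_sub_sub_cancel_left _ _ _
        have hA5 : Rn f - R f = lam • (Rn (S n (R f) - T (R f))) := by
          have h9 := hA2 (Rn f - R f)
          rw [hA4] at h9
          rw [← h9, _root_.map_smul]
        have hRn_le : ∀ x : L2, ‖Rn x‖ ≤ (2 * (2 * CB)) * ‖x‖ := by
          intro x
          calc ‖Rn x‖ ≤ ‖Rn‖ * ‖x‖ := Rn.le_opNorm _
          _ ≤ (2 * (2 * CB)) * ‖x‖ :=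
              mul_le_mul_of_nonneg_right hres_norm (norm_nonneg _)
        have hA6 : ‖Rn f - R f‖ ≤ ‖lam‖ * ((2 * (2 * CB)) * eps n) := by
          rw [hA5]
          refine le_trans (norm_smul_le _ _) ?_
          exact mul_le_mul_of_nonneg_left (hRn_le _) (norm_nonneg _)
        have hA7 : fres (S n) lam f - fres T lam f
            = S n (Rn f - R f) + (S n (R f) - T (R f)) := by
          have h7 : fres (S n) lam f = S n (Rn f) := rfl
          rw [h7, hfT, map_sub]
          exact (sub_add_sub_cancel _ _ _).symm
        rw [hA7]
        have heps0 : 0 ≤ eps n := norm_nonneg _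
        calc ‖S n (Rn f - R f) + (S n (R f) - T (R f))‖
            ≤ ‖S n (Rn f - R f)‖ + eps n := norm_add_le _ _
        _ ≤ ‖S n‖ * ‖Rn f - R f‖ + eps n := by
            exact add_le_add ((S n).le_opNorm _) le_rfl
        _ ≤ (1 + CT) * (‖lam‖ * ((2 * (2 * CB)) * eps n)) + eps n := by
            refine add_le_add ?_ le_rfl
            refine mul_le_mul hSn_norm hA6 (norm_nonneg _) (by linarith)
        _ ≤ c1 * eps n := by
            rw [hc1def]; ring_nf; nlinarith [norm_nonneg lam]
      · have := heps.const_mul c1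
        simpa using this
    exact tendsto_sub_nhds_zero_iff.1 key
end Part1
set_option maxHeartbeats 1000000 in
theorem statement9 (T : L2op) (K : ℝ → ℝ → ℂ) (kt kt' : ℝ → L2)
    (hK : IsK0Kernel K kt kt') (hT : IsInducedBy T K)
    (tau : ℕ → ℝ) (P : ℕ → L2op) (hiv : ConditionIV K T tau P)
    (m : ℕ) (hm : 1 ≤ m)
    (hconv : Tendsto (fun n => ‖(T - P n * T) * (P n * T) ^ m‖) atTop (𝓝 (0 : ℝ)))
    (b : ℕ → ℂ) (hb : Tendsto b atTop (𝓝 (0 : ℂ))) :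
    nablaS (fun n => b n • (1 : L2op) + P n * T) = regularSet T \ {0} ∧
    regularSet T \ {0} ⊆ nablaB (fun n => b n • (1 : L2op) + P n * T) := by
  have hproj := hiv.proj
  have htau := hiv.tendsto_top
  have hnuc := hiv.nuclear
  set S : ℕ → L2op := fun n => b n • (1 : L2op) + P n * T with hSdef
  have hSstrong : ∀ f : L2, Tendsto (fun n => S n f) atTop (𝓝 (T f)) := by
    intro f
    have h1 := Pn_tendsto_strongly hproj htau (T f)
    have h2 : Tendsto (fun n => b n • f) atTop (𝓝 0) := by
      have := hb.smul_const f
      simpa using this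
    have h3 : ∀ n, S n f = b n • f + P n (T f) := by
      intro n
      rw [hSdef]
      simp
    have h4 := h2.add h1
    rw [zero_add] at h4
    exact Tendsto.congr (fun n => (h3 n).symm) h4
  have hSbdd : ∀ᶠ n in atTop, ‖S n‖ ≤ 1 + ‖T‖ := by
    have hb1 : ∀ᶠ n in atTop, ‖b n‖ ≤ 1 := by
      have := hb.norm
      simp only [norm_zero] at this
      filter_upwards [this.eventually_lt_const one_pos] with n hn
      exact hn.le
    filter_upwards [hb1] with n hn
    rw [hSdef]
    have hPT : ‖P n * T‖ ≤ ‖T‖ := by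
      calc ‖P n * T‖ ≤ ‖P n‖ * ‖T‖ := norm_mul_le _ _
      _ ≤ 1 * ‖T‖ := mul_le_mul_of_nonneg_right (Pn_opNorm_le (hproj n)) (norm_nonneg _)
      _ = ‖T‖ := one_mul _
    calc ‖b n • (1:L2op) + P n * T‖ ≤ ‖b n • (1:L2op)‖ + ‖P n * T‖ := norm_add_le _ _
    _ ≤ ‖b n‖ * ‖(1:L2op)‖ + ‖T‖ := add_le_add (le_of_eq (L2op_norm_smul _ _)) hPT
    _ ≤ 1 * 1 + ‖T‖ := by
        refine add_le_add ?_ le_rfl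
        exact mul_le_mul hn norm_one_L2op (norm_nonneg _) zero_le_one
    _ = 1 + ‖T‖ := by ring
  constructor
  · ext z
    simp only [Set.mem_diff, Set.mem_singleton_iff]
    constructor
    · intro hz
      exact ⟨regular_of_mem_nablaS hSstrong hSbdd hz, hz.1.1⟩
    · rintro ⟨hreg, hz0⟩
      exact mem_nablaS_of_regular T tau P b hproj htau hnuc m hconv hb hreg hz0
  · rintro z ⟨hreg, hz0⟩
    have hz0' : z ≠ 0 := by
      intro h
      exact hz0 (Set.mem_singleton_iff.2 h)
    exact (mem_nablaS_of_regular T tau P b hproj htau hnuc m hconv hb hreg hz0').1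
end
end

section
/- Let T be a compact bounded linear operator on L² induced by a K⁰-kernel 𝐓 satisfying condition (iv), with subkernel operators Tₙ = PₙT. Then for every compact subset K of Π(T) \ {0}: every λ ∈ K belongs to Π(Tₙ) for all sufficiently large n, and as n → ∞ one has sup_{λ∈K} sup_{t∈ℝ} ‖𝐭′_{n|λ}(t) − 𝐭′_{|λ}(t)‖_{L²} → 0, sup_{λ∈K} sup_{s∈ℝ} ‖𝐭_{n|λ}(s) − 𝐭_{|λ}(s)‖_{L²} → 0, and sup_{λ∈K} sup_{(s,t)∈ℝ²} |𝐓_{n|λ}(s,t) − 𝐓_{|λ}(s,t)| → 0. -/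
open MeasureTheory Filter Topology ContinuousLinearMap
open scoped ENNReal NNReal

noncomputable section

lemma aux_inv {A : Type*} [NormedRing A] [NormOneClass A] [CompleteSpace A]
    (u : Aˣ) (b : A) (M : ℝ) (hM : 1 ≤ M)
    (hu : ‖((u⁻¹ : Aˣ) : A)‖ ≤ M) (hb : ‖b‖ ≤ 1 / (2 * M)) :
    ∃ v : Aˣ, ((v : A) = (u : A) - b ∧ ‖((v⁻¹ : Aˣ) : A)‖ ≤ 2 * M) ∧
      ‖((v⁻¹ : Aˣ) : A) - ((u⁻¹ : Aˣ) : A)‖ ≤ 2 * M ^ 2 * ‖b‖ := by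
  have hM0 : (0:ℝ) < M := lt_of_lt_of_le one_pos hM
  set t : A := ((u⁻¹ : Aˣ) : A) * b with ht
  have htn : ‖t‖ ≤ 1 / 2 := by
    calc ‖t‖ ≤ ‖((u⁻¹ : Aˣ) : A)‖ * ‖b‖ := norm_mul_le _ _
    _ ≤ M * (1 / (2 * M)) := by
        apply mul_le_mul hu hb (norm_nonneg _) (le_of_lt hM0)
    _ = 1 / 2 := by field_simp
  have htn1 : ‖t‖ < 1 := lt_of_le_of_lt htn (by norm_num)
  set w : Aˣ := Units.oneSub t htn1 with hw
  have hwv : (w : A) = 1 - t := rfl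
  have hwinv : ‖((w⁻¹ : Aˣ) : A)‖ ≤ 2 := by
    have h1 : ((w⁻¹ : Aˣ) : A) = 1 + t * ((w⁻¹ : Aˣ) : A) := by
      have := w.mul_inv
      rw [hwv, sub_mul, one_mul] at this
      have h := sub_eq_iff_eq_add'.mp this
      exact h.trans (add_comm _ _)
    have h2 : ‖((w⁻¹ : Aˣ) : A)‖ ≤ 1 + (1/2) * ‖((w⁻¹ : Aˣ) : A)‖ := by
      calc ‖((w⁻¹ : Aˣ) : A)‖ = ‖1 + t * ((w⁻¹ : Aˣ) : A)‖ := by rw [← h1]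
      _ ≤ ‖(1:A)‖ + ‖t * ((w⁻¹ : Aˣ) : A)‖ := norm_add_le _ _
      _ ≤ 1 + ‖t‖ * ‖((w⁻¹ : Aˣ) : A)‖ := by
          rw [norm_one]; gcongr; exact norm_mul_le _ _
      _ ≤ 1 + (1/2) * ‖((w⁻¹ : Aˣ) : A)‖ := by gcongr
    linarith
  refine ⟨u * w, ⟨?_, ?_⟩, ?_⟩
  · show ((u:A) * (w:A)) = (u:A) - b
    rw [hwv, mul_sub, mul_one, ht, ← mul_assoc, u.mul_inv, one_mul]
  · have : (((u*w)⁻¹ : Aˣ) : A) = ((w⁻¹ : Aˣ) : A) * ((u⁻¹ : Aˣ) : A) := by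
      rw [mul_inv_rev]; rfl
    rw [this]
    calc ‖((w⁻¹ : Aˣ) : A) * ((u⁻¹ : Aˣ) : A)‖ ≤ ‖((w⁻¹ : Aˣ) : A)‖ * ‖((u⁻¹ : Aˣ) : A)‖ := norm_mul_le _ _
    _ ≤ 2 * M := by apply mul_le_mul hwinv hu (norm_nonneg _) (by norm_num)
  · set v : Aˣ := u * w with hv
    have hvval : (v : A) = (u : A) - b := by
      show ((u:A) * (w:A)) = (u:A) - b
      rw [hwv, mul_sub, mul_one, ht, ← mul_assoc, u.mul_inv, one_mul]
    have hvinv : ‖((v⁻¹ : Aˣ) : A)‖ ≤ 2 * M := by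
      have : ((v⁻¹ : Aˣ) : A) = ((w⁻¹ : Aˣ) : A) * ((u⁻¹ : Aˣ) : A) := by
        rw [hv, mul_inv_rev]; rfl
      rw [this]
      calc ‖((w⁻¹ : Aˣ) : A) * ((u⁻¹ : Aˣ) : A)‖ ≤ ‖((w⁻¹ : Aˣ) : A)‖ * ‖((u⁻¹ : Aˣ) : A)‖ := norm_mul_le _ _
      _ ≤ 2 * M := by apply mul_le_mul hwinv hu (norm_nonneg _) (by norm_num)
    have key : ((v⁻¹ : Aˣ) : A) - ((u⁻¹ : Aˣ) : A)
        = ((v⁻¹ : Aˣ) : A) * b * ((u⁻¹ : Aˣ) : A) := by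
      have h1 : ((v⁻¹ : Aˣ) : A) * ((u:A) - (v:A)) * ((u⁻¹ : Aˣ) : A)
          = ((v⁻¹ : Aˣ) : A) - ((u⁻¹ : Aˣ) : A) := by
        rw [mul_sub, sub_mul, mul_assoc _ (u:A) _, u.mul_inv, mul_one, v.inv_mul, one_mul]
      rw [← h1, hvval, sub_sub_cancel]
    rw [key]
    calc ‖((v⁻¹ : Aˣ) : A) * b * ((u⁻¹ : Aˣ) : A)‖
        ≤ ‖((v⁻¹ : Aˣ) : A) * b‖ * ‖((u⁻¹ : Aˣ) : A)‖ := norm_mul_le _ _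
      _ ≤ ‖((v⁻¹ : Aˣ) : A)‖ * ‖b‖ * ‖((u⁻¹ : Aˣ) : A)‖ := by
          gcongr; exact norm_mul_le _ _
      _ ≤ (2*M) * ‖b‖ * M := by gcongr
      _ = 2 * M ^ 2 * ‖b‖ := by ring
lemma chi_cases (τ x : ℝ) : chi τ x = 0 ∨ chi τ x = 1 := by
  unfold chi
  by_cases h : x ∈ Set.Ioo (-τ) τ
  · right; simp [h]
  · left; simp [h]

lemma norm_chi_mul_le (τ x : ℝ) (z : ℂ) : ‖chi τ x * z‖ ≤ ‖z‖ := by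
  rcases chi_cases τ x with h | h <;> simp [h]

lemma norm_chi_sub_one_mul_le (τ x : ℝ) (z : ℂ) : ‖(chi τ x - 1) * z‖ ≤ ‖z‖ := by
  rcases chi_cases τ x with h | h <;> simp [h]

lemma chi_meas (τ : ℝ) : Measurable (chi τ) :=
  Measurable.indicator measurable_const measurableSet_Ioo

lemma Pn_norm_le (Pn : L2op) (τ : ℝ)
    (hproj : ∀ f : L2, (Pn f : ℝ → ℂ) =ᵐ[volume] fun x => chi τ x * (f : ℝ → ℂ) x)
    (f : L2) : ‖Pn f‖ ≤ ‖f‖ := by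
  rw [MeasureTheory.Lp.norm_def, MeasureTheory.Lp.norm_def]
  apply ENNReal.toReal_mono (MeasureTheory.Lp.eLpNorm_ne_top f)
  rw [eLpNorm_congr_ae (hproj f)]
  apply eLpNorm_mono_ae
  filter_upwards with x
  exact norm_chi_mul_le τ x _

lemma Pn_tendsto (P : ℕ → L2op) (tau : ℕ → ℝ)
    (hproj : ∀ n, ∀ f : L2, (P n f : ℝ → ℂ) =ᵐ[volume] fun x => chi (tau n) x * (f : ℝ → ℂ) x)
    (htau : Tendsto tau atTop atTop) (f : L2) :
    Tendsto (fun n => ‖P n f - f‖) atTop (𝓝 0) := by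
  have hsub : ∀ n, ((P n f - f : L2) : ℝ → ℂ)
      =ᵐ[volume] fun x => (chi (tau n) x - 1) * (f : ℝ → ℂ) x := by
    intro n
    filter_upwards [MeasureTheory.Lp.coeFn_sub (P n f) f, hproj n f] with x h1 h2
    rw [h1, Pi.sub_apply, h2]; ring
  have hnorm : ∀ n, ‖P n f - f‖
      = (eLpNorm (fun x => (chi (tau n) x - 1) * (f : ℝ → ℂ) x) 2 volume).toReal := by
    intro n
    rw [MeasureTheory.Lp.norm_def, eLpNorm_congr_ae (hsub n)]
  have hGf : ∀ n, eLpNorm (fun x => (chi (tau n) x - 1) * (f : ℝ → ℂ) x) 2 volume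
      = (∫⁻ x, (‖(chi (tau n) x - 1) * (f : ℝ → ℂ) x‖₊ : ℝ≥0∞) ^ (2:ℝ) ∂volume) ^ (1/2 : ℝ) := by
    intro n
    rw [eLpNorm_eq_lintegral_rpow_enorm_toReal two_ne_zero ENNReal.ofNat_ne_top]
    norm_num
    rfl
  have hlim : Tendsto (fun n => ∫⁻ x, (‖(chi (tau n) x - 1) * (f : ℝ → ℂ) x‖₊ : ℝ≥0∞) ^ (2:ℝ) ∂volume)
      atTop (𝓝 0) := by
    have h0 : (0 : ℝ≥0∞) = ∫⁻ (_ : ℝ), 0 ∂volume := by simp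
    rw [h0]
    apply MeasureTheory.tendsto_lintegral_of_dominated_convergence'
      (fun x => (‖(f : ℝ → ℂ) x‖₊ : ℝ≥0∞) ^ (2:ℝ))
    · intro n
      apply AEMeasurable.pow_const
      apply AEMeasurable.coe_nnreal_ennreal
      apply AEMeasurable.nnnorm
      exact (((chi_meas (tau n)).sub measurable_const).aemeasurable.mul
        (MeasureTheory.Lp.aestronglyMeasurable f).aemeasurable)
    · intro n
      filter_upwards with x
      apply ENNReal.rpow_le_rpow ?_ (by norm_num)
      apply ENNReal.coe_le_coe.2
      have := norm_chi_sub_one_mul_le (tau n) x ((f : ℝ → ℂ) x)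
      exact_mod_cast this
    · have h := lintegral_rpow_enorm_lt_top_of_eLpNorm_lt_top (f := ((f : ℝ → ℂ)))
        two_ne_zero ENNReal.ofNat_ne_top (MeasureTheory.Lp.eLpNorm_lt_top f)
      have h2 : (2 : ℝ≥0∞).toReal = (2:ℝ) := by norm_num
      rw [h2] at h
      exact h.ne
    · filter_upwards with x
      apply Filter.Tendsto.congr' ?_ tendsto_const_nhds
      filter_upwards [htau.eventually_gt_atTop |x|] with n hn
      have hx : x ∈ Set.Ioo (-(tau n)) (tau n) := by
        constructor
        · linarith [neg_abs_le x]
        · linarith [le_abs_self x]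
      have hchi : chi (tau n) x = 1 := by unfold chi; simp [hx]
      rw [hchi]
      simp [ENNReal.zero_rpow_of_pos]
  have hfin : Tendsto (fun n => eLpNorm (fun x => (chi (tau n) x - 1) * (f : ℝ → ℂ) x) 2 volume)
      atTop (𝓝 0) := by
    have := hlim.ennrpow_const (1/2 : ℝ)
    rw [ENNReal.zero_rpow_of_pos (by norm_num)] at this
    apply this.congr
    intro n
    rw [hGf n]
  have := (ENNReal.tendsto_toReal (a := 0) (by simp)).comp hfin
  simp only [ENNReal.toReal_zero] at this
  apply this.congr
  intro n
  rw [Function.comp_apply, hnorm n]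
lemma unif_on_compact (P : ℕ → L2op)
    (hP2 : ∀ n, ∀ x : L2, ‖P n x - x‖ ≤ 2 * ‖x‖)
    (hPt : ∀ x : L2, Tendsto (fun n => ‖P n x - x‖) atTop (𝓝 0))
    (D : Set L2) (hD : IsCompact D) {ε : ℝ} (hε : 0 < ε) :
    ∀ᶠ n in atTop, ∀ x ∈ D, ‖P n x - x‖ ≤ ε := by
  have hcover : D ⊆ ⋃ c : D, Metric.ball (c : L2) (ε/8) := by
    intro x hx
    exact Set.mem_iUnion.2 ⟨⟨x, hx⟩, Metric.mem_ball_self (by linarith)⟩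
  obtain ⟨t, ht⟩ := hD.elim_finite_subcover (fun c : D => Metric.ball (c : L2) (ε/8))
    (fun _ => Metric.isOpen_ball) hcover
  have hev : ∀ᶠ n in atTop, ∀ c ∈ t, ‖P n (c : L2) - (c : L2)‖ ≤ ε/2 := by
    rw [Filter.eventually_all_finset]
    intro c _
    exact (hPt (c : L2)).eventually (eventually_le_nhds (by linarith))
  filter_upwards [hev] with n hn x hx
  obtain ⟨c, hct, hxc⟩ := Set.mem_iUnion₂.1 (ht hx)
  have hdist : ‖x - (c : L2)‖ < ε/8 := by
    rw [← dist_eq_norm]; exact hxc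
  have key : P n x - x = (P n ((c:L2)) - (c:L2)) + (P n (x - (c:L2)) - (x - (c:L2))) := by
    rw [map_sub]; abel
  calc ‖P n x - x‖ ≤ ‖P n ((c:L2)) - (c:L2)‖ + ‖P n (x - (c:L2)) - (x - (c:L2))‖ := by
        rw [key]; exact norm_add_le _ _
    _ ≤ ε/2 + 2 * ‖x - (c:L2)‖ := add_le_add (hn c hct) (hP2 n _)
    _ ≤ ε/2 + 2 * (ε/8) := by linarith
    _ ≤ ε := by linarith

lemma ev_unif_range (P : ℕ → L2op)
    (hP2 : ∀ n, ∀ x : L2, ‖P n x - x‖ ≤ 2 * ‖x‖)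
    (hPt : ∀ x : L2, Tendsto (fun n => ‖P n x - x‖) atTop (𝓝 0))
    (g : ℝ → L2) (hg : Continuous g) (hgv : Tendsto g (cocompact ℝ) (𝓝 0))
    {ε : ℝ} (hε : 0 < ε) :
    ∀ᶠ n in atTop, ∀ s : ℝ, ‖P n (g s) - g s‖ ≤ ε := by
  have hgn : Tendsto (fun s => ‖g s‖) (cocompact ℝ) (𝓝 0) := by simpa using hgv.norm
  have hball : ∀ᶠ s in cocompact ℝ, ‖g s‖ ≤ ε/2 :=
    hgn.eventually (eventually_le_nhds (by linarith))
  obtain ⟨C, hC, hCs⟩ := Filter.hasBasis_cocompact.eventually_iff.1 hball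
  have hD : IsCompact (g '' C) := hC.image hg
  filter_upwards [unif_on_compact P hP2 hPt (g '' C) hD hε] with n hn s
  by_cases hs : s ∈ C
  · exact hn (g s) ⟨s, hs, rfl⟩
  · calc ‖P n (g s) - g s‖ ≤ 2 * ‖g s‖ := hP2 n _
      _ ≤ 2 * (ε/2) := by
          have := hCs hs
          linarith
      _ = ε := by ring

lemma bound_of_vanish (g : ℝ → L2) (hg : Continuous g) (hgv : Tendsto g (cocompact ℝ) (𝓝 0)) :
    ∃ B : ℝ, 1 ≤ B ∧ ∀ s : ℝ, ‖g s‖ ≤ B := by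
  have hgn : Tendsto (fun s => ‖g s‖) (cocompact ℝ) (𝓝 0) := by simpa using hgv.norm
  have hball : ∀ᶠ s in cocompact ℝ, ‖g s‖ ≤ 1 :=
    hgn.eventually (eventually_le_nhds one_pos)
  obtain ⟨C, hC, hCs⟩ := Filter.hasBasis_cocompact.eventually_iff.1 hball
  obtain ⟨B₀, hB₀⟩ := hC.exists_bound_of_continuousOn hg.continuousOn
  refine ⟨max B₀ 1, le_max_right _ _, fun s => ?_⟩
  by_cases hs : s ∈ C
  · exact le_trans (hB₀ s hs) (le_max_left _ _)
  · exact le_trans (hCs hs) (le_max_right _ _)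

lemma chi_eq_zero_iff {τ x : ℝ} : chi τ x = 0 ↔ x ∉ Set.Ioo (-τ) τ := by
  unfold chi
  by_cases h : x ∈ Set.Ioo (-τ) τ <;> simp [h]

lemma ev_small_outside (tau : ℕ → ℝ) (htau : Tendsto tau atTop atTop)
    (g : ℝ → L2) (hgv : Tendsto g (cocompact ℝ) (𝓝 0)) {ε : ℝ} (hε : 0 < ε) :
    ∀ᶠ n in atTop, ∀ s : ℝ, chi (tau n) s = 0 → ‖g s‖ ≤ ε := by
  have hgn : Tendsto (fun s => ‖g s‖) (cocompact ℝ) (𝓝 0) := by simpa using hgv.norm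
  have hball : ∀ᶠ s in cocompact ℝ, ‖g s‖ ≤ ε :=
    hgn.eventually (eventually_le_nhds hε)
  obtain ⟨C, hC, hCs⟩ := Filter.hasBasis_cocompact.eventually_iff.1 hball
  obtain ⟨R, hR⟩ := hC.isBounded.subset_closedBall 0
  filter_upwards [htau.eventually_gt_atTop R] with n hn s hchi
  rw [chi_eq_zero_iff] at hchi
  apply hCs
  intro hsC
  apply hchi
  have := hR hsC
  rw [Metric.mem_closedBall, Real.dist_eq, sub_zero] at this
  constructor
  · have h1 := neg_abs_le s
    linarith
  · have h1 := le_abs_self s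
    linarith

set_option maxHeartbeats 1000000 in
lemma ev_K_small_outside (tau : ℕ → ℝ) (htau : Tendsto tau atTop atTop)
    (K : ℝ → ℝ → ℂ) (hv : Tendsto (fun p : ℝ × ℝ => K p.1 p.2) (cocompact (ℝ × ℝ)) (𝓝 0))
    {ε : ℝ} (hε : 0 < ε) :
    ∀ᶠ n in atTop, ∀ s t : ℝ, chi (tau n) s = 0 → ‖K s t‖ ≤ ε := by
  have hgn : Tendsto (fun p : ℝ × ℝ => ‖K p.1 p.2‖) (cocompact (ℝ × ℝ)) (𝓝 0) := by
    simpa using hv.norm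
  have hball : ∀ᶠ p in cocompact (ℝ × ℝ), ‖K p.1 p.2‖ ≤ ε :=
    hgn.eventually (eventually_le_nhds hε)
  obtain ⟨C, hC, hCs⟩ := Filter.hasBasis_cocompact.eventually_iff.1 hball
  obtain ⟨R, hR⟩ := hC.isBounded.subset_closedBall 0
  filter_upwards [htau.eventually_gt_atTop R] with n hn s t hchi
  rw [chi_eq_zero_iff] at hchi
  have hst : (s, t) ∉ C := by
    intro hsC
    apply hchi
    have h1 := hR hsC
    rw [Metric.mem_closedBall, dist_zero_right] at h1
    have h2 : ‖s‖ ≤ ‖(s, t)‖ := norm_fst_le (s, t)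
    rw [Real.norm_eq_abs] at h2
    constructor
    · have := neg_abs_le s; have := le_trans h2 h1; linarith
    · have := le_abs_self s; have := le_trans h2 h1; linarith
  exact hCs hst
lemma ev_opnorm (P : ℕ → L2op)
    (hP2 : ∀ n, ∀ x : L2, ‖P n x - x‖ ≤ 2 * ‖x‖)
    (hPt : ∀ x : L2, Tendsto (fun n => ‖P n x - x‖) atTop (𝓝 0))
    (T : L2op) (hcpt : IsCompactOperator (⇑T : L2 → L2)) {ε : ℝ} (hε : 0 < ε) :
    ∀ᶠ n in atTop, ‖P n * T - T‖ ≤ ε := by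
  obtain ⟨Kset, hKset, hmem⟩ := hcpt
  obtain ⟨δ, hδ, hball⟩ := Metric.mem_nhds_iff.1 hmem
  set D : Set L2 := (fun y : L2 => ((2/δ : ℝ)) • y) '' Kset with hD
  have hDc : IsCompact D := hKset.image (continuous_const_smul _)
  have hTD : ∀ h : L2, ‖h‖ ≤ 1 → T h ∈ D := by
    intro h hh
    have h1 : (δ/2 : ℝ) • h ∈ Metric.ball (0 : L2) δ := by
      rw [Metric.mem_ball, dist_zero_right, norm_smul]
      have : ‖(δ/2 : ℝ)‖ = δ/2 := by
        rw [Real.norm_eq_abs, abs_of_pos (by linarith)]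
      rw [this]
      nlinarith [norm_nonneg h]
    have h2 : T ((δ/2 : ℝ) • h) ∈ Kset := hball h1
    refine ⟨T ((δ/2 : ℝ) • h), h2, ?_⟩
    show (2/δ : ℝ) • T ((δ/2 : ℝ) • h) = T h
    rw [← T.map_smul_of_tower, smul_smul]
    have : (2/δ : ℝ) * (δ/2 : ℝ) = 1 := by field_simp
    rw [this, one_smul]
  filter_upwards [unif_on_compact P hP2 hPt D hDc hε] with n hn
  apply ContinuousLinearMap.opNorm_le_bound _ hε.le
  intro f
  by_cases hf : f = 0
  · simp [hf]
  · have hfn : (0:ℝ) < ‖f‖ := norm_pos_iff.2 hf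
    set g : L2 := (‖f‖⁻¹ : ℝ) • f with hg
    have hgn : ‖g‖ ≤ 1 := by
      rw [hg, norm_smul, Real.norm_eq_abs, abs_of_pos (by positivity), inv_mul_cancel₀ hfn.ne']
    have hfg : f = (‖f‖ : ℝ) • g := by
      rw [hg, smul_smul, mul_inv_cancel₀ hfn.ne', one_smul]
    have key : (P n * T - T) f = (‖f‖ : ℝ) • (P n (T g) - T g) := by
      rw [ContinuousLinearMap.sub_apply, ContinuousLinearMap.mul_apply]
      nth_rewrite 1 [hfg]
      nth_rewrite 2 [hfg]
      rw [T.map_smul_of_tower, (P n).map_smul_of_tower, smul_sub]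
    rw [key, norm_smul, Real.norm_eq_abs, abs_of_pos hfn, mul_comm]
    exact mul_le_mul_of_nonneg_right (hn (T g) (hTD g hgn)) hfn.le
lemma resolvent_bound (T : L2op) (Kc : Set ℂ) (hKc : IsCompact Kc)
    (hreg : ∀ lam ∈ Kc, IsUnit ((1 : L2op) - lam • T)) :
    ∃ M : ℝ, 1 ≤ M ∧ ∀ lam ∈ Kc, ‖res T lam‖ ≤ M := by
  have hcont : ContinuousOn (fun lam : ℂ => res T lam) Kc := by
    intro lam hlam
    obtain ⟨u, hu⟩ := hreg lam hlam
    have h1 : ContinuousAt (Ring.inverse : L2op → L2op) ((1 : L2op) - lam • T) := by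
      rw [← hu]; exact NormedRing.inverse_continuousAt u
    have h2 : Continuous (fun lam : ℂ => (1 : L2op) - lam • T) :=
      continuous_const.sub (continuous_id.smul continuous_const)
    have := ContinuousAt.comp (g := (Ring.inverse : L2op → L2op))
      (f := fun lam : ℂ => (1 : L2op) - lam • T) (x := lam) h1 h2.continuousAt
    exact this.continuousWithinAt
  obtain ⟨M₀, hM₀⟩ := hKc.exists_bound_of_continuousOn hcont
  exact ⟨max M₀ 1, le_max_right _ _, fun lam hlam =>
    le_trans (hM₀ lam hlam) (le_max_left _ _)⟩
instance : Nontrivial L2 := by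
  refine ⟨⟨MeasureTheory.indicatorConstLp 2
    (measurableSet_Ioo (a := (0:ℝ)) (b := 1)) (by simp) (1:ℂ), 0, ?_⟩⟩
  intro h
  have h2 := MeasureTheory.norm_indicatorConstLp (p := 2)
    (μ := (volume : Measure ℝ)) (c := (1:ℂ))
    (hs := measurableSet_Ioo (a := (0:ℝ)) (b := 1)) (hμs := by simp)
    two_ne_zero ENNReal.ofNat_ne_top
  rw [h, norm_zero] at h2
  rw [Real.volume_real_Ioo_of_le zero_le_one] at h2
  norm_num at h2

example : NormOneClass L2op := inferInstance
example : CompleteSpace L2op := inferInstance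

set_option maxHeartbeats 2000000 in
lemma main_event (T : L2op) (P : ℕ → L2op) (Kc : Set ℂ)
    (L M : ℝ) (hL1 : 1 ≤ L) (hM1 : 1 ≤ M)
    (hL : ∀ lam ∈ Kc, ‖lam‖ ≤ L)
    (hreg : ∀ lam ∈ Kc, IsUnit ((1 : L2op) - lam • T))
    (hM : ∀ lam ∈ Kc, ‖res T lam‖ ≤ M)
    {δ : ℝ} (hδ : 0 < δ) (hδle : δ ≤ 1/(2*L*M))
    (n : ℕ) (hn : ‖P n * T - T‖ ≤ δ) :
    ∀ lam ∈ Kc, IsUnit ((1 : L2op) - lam • (P n * T)) ∧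
      ‖res (P n * T) lam‖ ≤ 2*M ∧
      ‖res (P n * T) lam - res T lam‖ ≤ 2*M^2*(L*δ) := by
  have hL0 : (0:ℝ) < L := lt_of_lt_of_le one_pos hL1
  have hM0 : (0:ℝ) < M := lt_of_lt_of_le one_pos hM1
  intro lam hlam
  obtain ⟨u, hu⟩ := hreg lam hlam
  have hres : res T lam = ((u⁻¹ : L2opˣ) : L2op) := by
    rw [res, ← hu, Ring.inverse_unit]
  have huinv : ‖((u⁻¹ : L2opˣ) : L2op)‖ ≤ M := by rw [← hres]; exact hM lam hlam
  set b : L2op := lam • (P n * T) - lam • T with hb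
  have hbn : ‖b‖ ≤ L * δ := by
    calc ‖b‖ = ‖lam • (P n * T - T)‖ := by rw [hb, smul_sub]
    _ = ‖lam‖ * ‖P n * T - T‖ := norm_smul lam (P n * T - T)
    _ ≤ L * δ := mul_le_mul (hL lam hlam) hn (norm_nonneg _) hL0.le
  have hb2 : ‖b‖ ≤ 1/(2*M) := by
    refine le_trans hbn ?_
    have h1 : L * δ ≤ L * (1/(2*L*M)) := by gcongr
    have h2 : L * (1/(2*L*M)) = 1/(2*M) := by field_simp
    linarith
  obtain ⟨v, ⟨hvval, hvinv⟩, hvdiff⟩ := aux_inv u b M hM1 huinv hb2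
  have hveq : (v : L2op) = 1 - lam • (P n * T) := by rw [hvval, hu, hb]; abel
  have hres' : res (P n * T) lam = ((v⁻¹ : L2opˣ) : L2op) := by
    rw [res, ← hveq, Ring.inverse_unit]
  refine ⟨⟨v, hveq⟩, ?_, ?_⟩
  · rw [hres']; exact hvinv
  · rw [hres', hres]
    refine le_trans hvdiff ?_
    have : 2*M^2*‖b‖ ≤ 2*M^2*(L*δ) := by gcongr
    linarith
set_option maxHeartbeats 4000000 in
theorem statement12 (T : L2op) (K : ℝ → ℝ → ℂ) (kt kt' : ℝ → L2)
    (hK : IsK0Kernel K kt kt') (hT : IsInducedBy T K)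
    (tau : ℕ → ℝ) (P : ℕ → L2op) (hiv : ConditionIV K T tau P)
    (hcpt : IsCompactOperator (⇑T : L2 → L2))
    (Kc : Set ℂ) (hKc : IsCompact Kc) (hKcsub : Kc ⊆ regularSet T \ {0}) :
    (∀ᶠ n in atTop, ∀ lam ∈ Kc, lam ∈ regularSet (P n * T)) ∧
    Tendsto (fun n => ⨆ lam ∈ Kc, ⨆ t : ℝ,
        ‖res (P n * T) lam (P n (kt' t)) - res T lam (kt' t)‖) atTop (𝓝 (0 : ℝ)) ∧
    Tendsto (fun n => ⨆ lam ∈ Kc, ⨆ s : ℝ,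
        ‖chi (tau n) s • (adjoint (res (P n * T) lam)) (kt s)
          - (adjoint (res T lam)) (kt s)‖) atTop (𝓝 (0 : ℝ)) ∧
    Tendsto (fun n => ⨆ lam ∈ Kc, ⨆ p : ℝ × ℝ,
        ‖resKerN T K kt kt' (tau n) (P n) lam p.1 p.2
          - resKer T K kt kt' lam p.1 p.2‖) atTop (𝓝 (0 : ℝ)) := by
  -- constants
  have hreg : ∀ lam ∈ Kc, IsUnit ((1 : L2op) - lam • T) := fun lam hlam => (hKcsub hlam).1
  obtain ⟨L₀, hL₀⟩ := hKc.exists_bound_of_continuousOn continuousOn_id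
  set L : ℝ := max L₀ 1 with hLdef
  have hL1 : (1:ℝ) ≤ L := le_max_right _ _
  have hL : ∀ lam ∈ Kc, ‖lam‖ ≤ L := fun lam hlam => le_trans (hL₀ lam hlam) (le_max_left _ _)
  obtain ⟨M, hM1, hM⟩ := resolvent_bound T Kc hKc hreg
  obtain ⟨B, hB1, hB⟩ := bound_of_vanish kt hK.cont_t hK.vanish_t
  obtain ⟨B', hB'1, hB'⟩ := bound_of_vanish kt' hK.cont_t' hK.vanish_t'
  have hL0 : (0:ℝ) < L := lt_of_lt_of_le one_pos hL1
  have hM0 : (0:ℝ) < M := lt_of_lt_of_le one_pos hM1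
  have hB0 : (0:ℝ) < B := lt_of_lt_of_le one_pos hB1
  have hB'0 : (0:ℝ) < B' := lt_of_lt_of_le one_pos hB'1
  have hM2 : (0:ℝ) < M^2 := pow_pos hM0 2
  have h2LM : (0:ℝ) < 2*L*M := by nlinarith [mul_pos hL0 hM0]
  have h4M2LB' : (0:ℝ) < 4*M^2*L*B' := by nlinarith [mul_pos (mul_pos hM2 hL0) hB'0]
  have h2M2LB : (0:ℝ) < 2*M^2*L*B := by nlinarith [mul_pos (mul_pos hM2 hL0) hB0]
  have h2M2LB' : (0:ℝ) < 2*M^2*L*B' := by nlinarith [mul_pos (mul_pos hM2 hL0) hB'0]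
  have h2LB : (0:ℝ) < 2*L*B := by nlinarith [mul_pos hL0 hB0]
  have h2LMB' : (0:ℝ) < 2*L*M*B' := by nlinarith [mul_pos (mul_pos hL0 hM0) hB'0]
  have h2M2L : (0:ℝ) < 2*M^2*L := by nlinarith [mul_pos hM2 hL0]
  have hP1 : ∀ n, ∀ f : L2, ‖P n f‖ ≤ ‖f‖ := fun n f => Pn_norm_le (P n) (tau n) (hiv.proj n) f
  have hP2 : ∀ n, ∀ x : L2, ‖P n x - x‖ ≤ 2 * ‖x‖ := by
    intro n x
    calc ‖P n x - x‖ ≤ ‖P n x‖ + ‖x‖ := norm_sub_le _ _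
    _ ≤ 2 * ‖x‖ := by linarith [hP1 n x]
  have hPt := Pn_tendsto P tau hiv.proj hiv.tendsto_top
  set δ0 : ℝ := 1/(2*L*M) with hδ0def
  have hδ0 : 0 < δ0 := div_pos one_pos h2LM
  have hmain : ∀ δ : ℝ, 0 < δ → δ ≤ δ0 → ∀ᶠ n in atTop, ∀ lam ∈ Kc,
      IsUnit ((1 : L2op) - lam • (P n * T)) ∧
      ‖res (P n * T) lam‖ ≤ 2*M ∧
      ‖res (P n * T) lam - res T lam‖ ≤ 2*M^2*(L*δ) := by
    intro δ hδ hδle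
    filter_upwards [ev_opnorm P hP2 hPt T hcpt hδ] with n hn
    exact main_event T P Kc L M hL1 hM1 hL hreg hM hδ hδle n hn
  -- core estimate for part 2 (and reused in part 4)
  have hcore : ∀ ε : ℝ, 0 < ε → ∀ᶠ n in atTop, ∀ lam ∈ Kc, ∀ t : ℝ,
      ‖res (P n * T) lam (P n (kt' t)) - res T lam (kt' t)‖ ≤ ε := by
    intro ε hε
    set δ : ℝ := min δ0 (ε/(4*M^2*L*B')) with hδdef
    have hδpos : 0 < δ := lt_min hδ0 (div_pos hε h4M2LB')
    have hδle : δ ≤ δ0 := min_le_left _ _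
    have hδle2 : δ ≤ ε/(4*M^2*L*B') := min_le_right _ _
    have hε4M : 0 < ε/(4*M) := div_pos hε (by linarith)
    filter_upwards [hmain δ hδpos hδle,
      ev_unif_range P hP2 hPt kt' hK.cont_t' hK.vanish_t' hε4M] with n hm h2 lam hlam t
    obtain ⟨_, hR2M, hRd⟩ := hm lam hlam
    have htri : res (P n * T) lam (P n (kt' t)) - res T lam (kt' t)
        = (res (P n * T) lam (P n (kt' t)) - res (P n * T) lam (kt' t))
          + (res (P n * T) lam (kt' t) - res T lam (kt' t)) := by abel
    have h1 : ‖res (P n * T) lam (P n (kt' t)) - res (P n * T) lam (kt' t)‖ ≤ ε/2 := by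
      rw [← map_sub]
      calc ‖res (P n * T) lam (P n (kt' t) - kt' t)‖
          ≤ ‖res (P n * T) lam‖ * ‖P n (kt' t) - kt' t‖ := ContinuousLinearMap.le_opNorm _ _
        _ ≤ (2*M) * (ε/(4*M)) := by
            apply mul_le_mul hR2M (h2 t) (norm_nonneg _) (by linarith)
        _ = ε/2 := by field_simp; ring
    have h2' : ‖res (P n * T) lam (kt' t) - res T lam (kt' t)‖ ≤ ε/2 := by
      rw [← ContinuousLinearMap.sub_apply]
      calc ‖(res (P n * T) lam - res T lam) (kt' t)‖
          ≤ ‖res (P n * T) lam - res T lam‖ * ‖kt' t‖ := ContinuousLinearMap.le_opNorm _ _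
        _ ≤ (2*M^2*(L*δ)) * B' := by
            apply mul_le_mul hRd (hB' t) (norm_nonneg _)
              (by nlinarith [mul_pos h2M2L hδpos])
        _ ≤ (2*M^2*(L*(ε/(4*M^2*L*B')))) * B' := by
            nlinarith [mul_le_mul_of_nonneg_left hδle2 h2M2LB'.le]
        _ = ε/2 := by field_simp; ring
    calc ‖res (P n * T) lam (P n (kt' t)) - res T lam (kt' t)‖
        ≤ ‖res (P n * T) lam (P n (kt' t)) - res (P n * T) lam (kt' t)‖
          + ‖res (P n * T) lam (kt' t) - res T lam (kt' t)‖ := by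
          rw [htri]; exact norm_add_le _ _
      _ ≤ ε := by linarith
  -- a helper to conclude tendsto from eventual bounds
  have tend_of : ∀ a : ℕ → ℝ, (∀ n, 0 ≤ a n) →
      (∀ ε : ℝ, 0 < ε → ∀ᶠ n in atTop, a n ≤ ε) → Tendsto a atTop (𝓝 (0:ℝ)) := by
    intro a ha h
    rw [Metric.tendsto_atTop]
    intro ε hε
    obtain ⟨N, hN⟩ := eventually_atTop.1 (h (ε/2) (by linarith))
    exact ⟨N, fun n hn => by
      rw [Real.dist_eq, sub_zero, abs_of_nonneg (ha n)]
      linarith [hN n hn]⟩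
  refine ⟨?_, ?_, ?_, ?_⟩
  · -- part 1
    filter_upwards [hmain δ0 hδ0 le_rfl] with n hm lam hlam
    exact (hm lam hlam).1
  · -- part 2
    apply tend_of
    · intro n
      exact Real.iSup_nonneg fun lam => Real.iSup_nonneg fun _ =>
        Real.iSup_nonneg fun t => norm_nonneg _
    · intro ε hε
      filter_upwards [hcore ε hε] with n hc
      exact Real.iSup_le (fun lam => Real.iSup_le (fun hlam =>
        Real.iSup_le (fun t => hc lam hlam t) hε.le) hε.le) hε.le
  · -- part 3
    apply tend_of
    · intro n
      exact Real.iSup_nonneg fun lam => Real.iSup_nonneg fun _ =>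
        Real.iSup_nonneg fun s => norm_nonneg _
    · intro ε hε
      set δ : ℝ := min δ0 (ε/(2*M^2*L*B)) with hδdef
      have hδpos : 0 < δ := lt_min hδ0 (div_pos hε h2M2LB)
      have hδle : δ ≤ δ0 := min_le_left _ _
      have hδle2 : δ ≤ ε/(2*M^2*L*B) := min_le_right _ _
      have hεM : 0 < ε/M := div_pos hε hM0
      filter_upwards [hmain δ hδpos hδle,
        ev_small_outside tau hiv.tendsto_top kt hK.vanish_t hεM] with n hm h3
      apply Real.iSup_le (fun lam => ?_) hε.le
      apply Real.iSup_le (fun hlam => ?_) hε.le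
      apply Real.iSup_le (fun s => ?_) hε.le
      obtain ⟨_, hR2M, hRd⟩ := hm lam hlam
      rcases chi_cases (tau n) s with h0 | h1
      · rw [h0, zero_smul, zero_sub, norm_neg]
        calc ‖adjoint (res T lam) (kt s)‖
            ≤ ‖adjoint (res T lam)‖ * ‖kt s‖ := ContinuousLinearMap.le_opNorm _ _
          _ = ‖res T lam‖ * ‖kt s‖ := by
              rw [LinearIsometryEquiv.norm_map]
          _ ≤ M * (ε/M) := by
              apply mul_le_mul (hM lam hlam) (h3 s h0) (norm_nonneg _) hM0.le
          _ = ε := by field_simp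
      · rw [h1, one_smul]
        have hsub : adjoint (res (P n * T) lam) (kt s) - adjoint (res T lam) (kt s)
            = (adjoint (res (P n * T) lam - res T lam)) (kt s) := by
          rw [map_sub, ContinuousLinearMap.sub_apply]
        rw [hsub]
        calc ‖(adjoint (res (P n * T) lam - res T lam)) (kt s)‖
            ≤ ‖adjoint (res (P n * T) lam - res T lam)‖ * ‖kt s‖ :=
              ContinuousLinearMap.le_opNorm _ _
          _ = ‖res (P n * T) lam - res T lam‖ * ‖kt s‖ := by
              rw [LinearIsometryEquiv.norm_map]
          _ ≤ (2*M^2*(L*δ)) * B := by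
              apply mul_le_mul hRd (hB s) (norm_nonneg _)
                (by nlinarith [mul_pos h2M2L hδpos])
          _ ≤ (2*M^2*(L*(ε/(2*M^2*L*B)))) * B := by
              nlinarith [mul_le_mul_of_nonneg_left hδle2 h2M2LB.le]
          _ = ε := by field_simp
  · -- part 4
    apply tend_of
    · intro n
      exact Real.iSup_nonneg fun lam => Real.iSup_nonneg fun _ =>
        Real.iSup_nonneg fun p => norm_nonneg _
    · intro ε hε
      have he2 : 0 < ε/(2*L*B) := div_pos hε h2LB
      have he3 : 0 < ε/(2*L*M*B') := div_pos hε h2LMB'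
      have he4 : 0 < ε/2 := by linarith
      filter_upwards [hcore (ε/(2*L*B)) he2,
        ev_small_outside tau hiv.tendsto_top kt hK.vanish_t he3,
        ev_K_small_outside tau hiv.tendsto_top K hK.vanish he4] with n hc h3 h4
      apply Real.iSup_le (fun lam => ?_) hε.le
      apply Real.iSup_le (fun hlam => ?_) hε.le
      apply Real.iSup_le (fun p => ?_) hε.le
      obtain ⟨s, t⟩ := p
      rcases chi_cases (tau n) s with h0 | h1
      · have h0' : resKerN T K kt kt' (tau n) (P n) lam s t = 0 := by
          rw [resKerN, h0]; ring
        rw [h0', zero_sub, norm_neg, resKer]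
        calc ‖lam * (inner ℂ (kt s) (res T lam (kt' t)) : ℂ) + K s t‖
            ≤ ‖lam * (inner ℂ (kt s) (res T lam (kt' t)) : ℂ)‖ + ‖K s t‖ := norm_add_le _ _
          _ ≤ ‖lam‖ * (‖kt s‖ * ‖res T lam (kt' t)‖) + ε/2 := by
              apply add_le_add _ (h4 s t h0)
              rw [norm_mul]
              exact mul_le_mul_of_nonneg_left (norm_inner_le_norm _ _) (norm_nonneg _)
          _ ≤ L * ((ε/(2*L*M*B')) * (M * B')) + ε/2 := by
              apply add_le_add_left
              apply mul_le_mul (hL lam hlam) _ (by positivity) hL0.le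
              apply mul_le_mul (h3 s h0) _ (norm_nonneg _) he3.le
              calc ‖res T lam (kt' t)‖ ≤ ‖res T lam‖ * ‖kt' t‖ :=
                    ContinuousLinearMap.le_opNorm _ _
                _ ≤ M * B' := mul_le_mul (hM lam hlam) (hB' t) (norm_nonneg _) hM0.le
          _ = ε := by field_simp; ring
      · have hdiff : resKerN T K kt kt' (tau n) (P n) lam s t - resKer T K kt kt' lam s t
            = lam * ((inner ℂ (kt s) (res (P n * T) lam (P n (kt' t))) : ℂ)
              - (inner ℂ (kt s) (res T lam (kt' t)) : ℂ)) := by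
          rw [resKerN, resKer, h1]; ring
        rw [hdiff, ← inner_sub_right, norm_mul]
        calc ‖lam‖ * ‖(inner ℂ (kt s) (res (P n * T) lam (P n (kt' t))
              - res T lam (kt' t)) : ℂ)‖
            ≤ L * (B * (ε/(2*L*B))) := by
              apply mul_le_mul (hL lam hlam) _ (norm_nonneg _) hL0.le
              calc ‖(inner ℂ (kt s) (res (P n * T) lam (P n (kt' t)) - res T lam (kt' t)) : ℂ)‖
                  ≤ ‖kt s‖ * ‖res (P n * T) lam (P n (kt' t)) - res T lam (kt' t)‖ :=
                    norm_inner_le_norm _ _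
                _ ≤ B * (ε/(2*L*B)) :=
                    mul_le_mul (hB s) (hc lam hlam t) (norm_nonneg _) hB0.le
          _ = ε/2 := by field_simp
          _ ≤ ε := by linarith
end
end
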